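/- arXiv:1212.5890 — 4 statements merged into one kernel-verified Lean document; each statement's English description precedes it below -/
import Mathlib

section
/- Let L : ℂ → ℂ be hybridly universal, let K ⊂ D be a compact set with connected complement, and let f be continuous and non-vanishing on K and analytic in the interior of K. Let d ≥ 1 and c_0, …, c_d ∈ 𝒟 with c_d not identically zero, and write P_s(z) := Σ_{j=0}^d c_j(s) z^j. Then for every ε > 0, liminf_{T→∞} ν_T{ max_{s∈K} | P_{s+iτ}(L(s+iτ)) − P_s(f(s)) | < ε } > 0. -/
open MeasureTheory Filter Complex Set Finset

noncomputable def lowerDensity (P : ℝ → Prop) : ℝ :=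
  Filter.liminf (fun T : ℝ =>
    (MeasureTheory.volume {τ ∈ Set.Icc (0:ℝ) T | P τ}).toReal / T) Filter.atTop

noncomputable def distToInt (x : ℝ) : ℝ := |x - round x|

def stripD : Set ℂ := {s : ℂ | 1/2 < s.re ∧ s.re < 1}

def IsGenDirichletSeries (A : ℂ → ℂ) : Prop :=
  ∃ (a : ℕ → ℂ) (lam : ℕ → ℝ),
    ∀ s : ℂ, 1/2 < s.re →
      Summable (fun n => ‖a n * Complex.exp (-(lam n : ℂ) * s)‖) ∧
      A s = ∑' n, a n * Complex.exp (-(lam n : ℂ) * s)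

def HybridUniversal (L : ℂ → ℂ) : Prop :=
  ∀ K : Set ℂ, IsCompact K → K ⊆ stripD → IsPreconnected Kᶜ →
    ∀ f : ℂ → ℂ, ContinuousOn f K → (∀ s ∈ K, f s ≠ 0) →
      DifferentiableOn ℂ f (interior K) →
      ∀ (k : ℕ) (α θ : Fin k → ℝ), LinearIndependent ℚ α →
        ∀ ε : ℝ, 0 < ε →
          0 < lowerDensity (fun τ =>
            (∀ s ∈ K, Norm.norm (L (s + τ * Complex.I) - f s) < ε) ∧
            ∀ j, distToInt (τ * α j - θ j) < ε)

def HybridStronglyUniversal (L : ℂ → ℂ) : Prop :=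
  ∀ K : Set ℂ, IsCompact K → K ⊆ stripD → IsPreconnected Kᶜ →
    ∀ f : ℂ → ℂ, ContinuousOn f K →
      DifferentiableOn ℂ f (interior K) →
      ∀ (k : ℕ) (α θ : Fin k → ℝ), LinearIndependent ℚ α →
        ∀ ε : ℝ, 0 < ε →
          0 < lowerDensity (fun τ =>
            (∀ s ∈ K, Norm.norm (L (s + τ * Complex.I) - f s) < ε) ∧
            ∀ j, distToInt (τ * α j - θ j) < ε)

def zeroRect (F : ℂ → ℂ) (σ₁ σ₂ T : ℝ) : Set ℂ :=
  {s : ℂ | F s = 0 ∧ σ₁ < s.re ∧ s.re < σ₂ ∧ 0 < s.im ∧ s.im < T}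


lemma lowerDensity_mono {P Q : ℝ → Prop} (h : ∀ τ, P τ → Q τ) :
    lowerDensity P ≤ lowerDensity Q := by
  have key : ∀ T : ℝ, (volume {τ ∈ Set.Icc (0:ℝ) T | P τ}).toReal / T ≤
      (volume {τ ∈ Set.Icc (0:ℝ) T | Q τ}).toReal / T := by
    intro T
    rcases le_or_gt T 0 with hT | hT
    · rcases eq_or_lt_of_le hT with rfl | hT'
      · simp
      · have : Set.Icc (0:ℝ) T = ∅ := Set.Icc_eq_empty (by linarith)
        simp [this]
    · have hfin : volume {τ ∈ Set.Icc (0:ℝ) T | Q τ} ≠ ⊤ := by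
        refine ne_top_of_le_ne_top ?_ (measure_mono (Set.sep_subset _ _))
        simp [Real.volume_Icc]
      have hmono : (volume {τ ∈ Set.Icc (0:ℝ) T | P τ}).toReal ≤
          (volume {τ ∈ Set.Icc (0:ℝ) T | Q τ}).toReal := by
        refine ENNReal.toReal_mono hfin (measure_mono ?_)
        exact fun τ hτ => ⟨hτ.1, h τ hτ.2⟩
      exact div_le_div_of_nonneg_right hmono hT.le
  have hbdd0 : ∀ (R : ℝ → Prop) (T : ℝ), 0 ≤ (volume {τ ∈ Set.Icc (0:ℝ) T | R τ}).toReal / T := by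
    intro R
    intro T
    rcases le_or_gt T 0 with hT | hT
    · rcases eq_or_lt_of_le hT with rfl | hT'
      · simp
      · have : Set.Icc (0:ℝ) T = ∅ := Set.Icc_eq_empty (by linarith)
        simp [this]
    · positivity
  have hub : ∀ (R : ℝ → Prop) (T : ℝ), (volume {τ ∈ Set.Icc (0:ℝ) T | R τ}).toReal / T ≤ 1 := by
    intro R
    intro T
    rcases le_or_gt T 0 with hT | hT
    · rcases eq_or_lt_of_le hT with rfl | hT'
      · simp
      · have : Set.Icc (0:ℝ) T = ∅ := Set.Icc_eq_empty (by linarith)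
        simp [this]
    · rw [div_le_one hT]
      have h1 : volume {τ ∈ Set.Icc (0:ℝ) T | R τ} ≤ volume (Set.Icc (0:ℝ) T) :=
        measure_mono (Set.sep_subset _ _)
      have h2 : (volume (Set.Icc (0:ℝ) T)).toReal = T := by
        simp [Real.volume_Icc, ENNReal.toReal_ofReal hT.le]
      calc (volume {τ ∈ Set.Icc (0:ℝ) T | R τ}).toReal
          ≤ (volume (Set.Icc (0:ℝ) T)).toReal := ENNReal.toReal_mono (by simp [Real.volume_Icc]) h1
        _ = T := h2
  refine Filter.liminf_le_liminf (Filter.Eventually.of_forall key) ?_ ?_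
  · exact Filter.isBoundedUnder_of ⟨0, fun T => hbdd0 P T⟩
  · have : Filter.IsBoundedUnder (· ≤ ·) Filter.atTop
        (fun T : ℝ => (volume {τ ∈ Set.Icc (0:ℝ) T | Q τ}).toReal / T) :=
      Filter.isBoundedUnder_of ⟨1, fun T => hub Q T⟩
    exact this.isCoboundedUnder_ge


lemma exists_rational_structure {ι : Type} [Fintype ι] (v : ι → ℝ) :
    ∃ (k : ℕ) (α : Fin k → ℝ) (p : ι → Fin k → ℤ),
      LinearIndependent ℚ α ∧ ∀ m, v m = ∑ i, (p m i : ℝ) * α i := by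
  classical
  set W := Submodule.span ℚ (Set.range v) with hW
  have : FiniteDimensional ℚ W := FiniteDimensional.span_of_finite ℚ (Set.finite_range v)
  set k := Module.finrank ℚ W with hk
  let b : Module.Basis (Fin k) ℚ W := Module.finBasis ℚ W
  have hmem : ∀ m, v m ∈ W := fun m => Submodule.subset_span ⟨m, rfl⟩
  set q : ι → Fin k → ℚ := fun m i => b.repr ⟨v m, hmem m⟩ i with hq
  set Q : ℕ := ∏ m : ι, ∏ i : Fin k, (q m i).den with hQ
  have hQpos : 0 < Q := Finset.prod_pos (fun m _ => Finset.prod_pos (fun i _ => (q m i).pos))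
  have hQR : (Q : ℝ) ≠ 0 := by positivity
  have hden : ∀ m i, ((q m i).den : ℤ) ∣ (Q : ℤ) := by
    intro m i
    have h1 : (q m i).den ∣ ∏ i, (q m i).den := Finset.dvd_prod_of_mem _ (Finset.mem_univ i)
    have h2 : (∏ i, (q m i).den) ∣ Q := Finset.dvd_prod_of_mem _ (Finset.mem_univ m)
    exact_mod_cast h1.trans h2
  have hp' : ∀ m i, ∃ p : ℤ, (p : ℚ) = q m i * Q := by
    intro m i
    obtain ⟨c, hc⟩ := hden m i
    refine ⟨(q m i).num * c, ?_⟩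
    have : (Q : ℚ) = (q m i).den * c := by exact_mod_cast hc
    rw [this, ← mul_assoc, Rat.mul_den_eq_num]
    push_cast; ring
  choose p hp using hp'
  refine ⟨k, fun i => (Q : ℝ)⁻¹ * (b i : ℝ), p, ?_, ?_⟩
  · -- linear independence
    have hb : LinearIndependent ℚ (fun i : Fin k => ((b i : W) : ℝ)) :=
      b.linearIndependent.map' W.subtype (Submodule.ker_subtype W)
    rw [Fintype.linearIndependent_iff] at hb ⊢
    intro g hg i
    apply hb g _ i
    have h0 : (Q:ℝ)⁻¹ * ∑ i, g i • ((b i : W) : ℝ) = 0 := by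
      rw [Finset.mul_sum, ← hg]
      refine Finset.sum_congr rfl (fun i _ => ?_)
      rw [Rat.smul_def, Rat.smul_def]
      ring
    rcases mul_eq_zero.mp h0 with h | h
    · exact absurd h (inv_ne_zero hQR)
    · exact h
  · intro m
    have hrepr : ∑ i, (q m i) • (b i : W) = (⟨v m, hmem m⟩ : W) := b.sum_repr _
    have hreprR : v m = ∑ i, ((q m i : ℝ)) * ((b i : W) : ℝ) := by
      have h2 := congrArg (fun x : W => (x : ℝ)) hrepr
      simp only [Submodule.coe_sum] at h2
      rw [← h2]
      refine Finset.sum_congr rfl (fun i _ => ?_)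
      rw [SetLike.val_smul, Rat.smul_def]
    rw [hreprR]
    refine Finset.sum_congr rfl (fun i _ => ?_)
    have hpR : (p m i : ℝ) = (q m i : ℝ) * Q := by exact_mod_cast congrArg (fun x : ℚ => (x : ℝ)) (hp m i)
    simp only [hpR]
    field_simp


lemma pow_diff_bound (z w : ℂ) (R : ℝ) (hR : 1 ≤ R)
    (hz : Norm.norm z ≤ R) (hw : Norm.norm w ≤ R) (n : ℕ) :
    Norm.norm (z ^ n - w ^ n) ≤ n * R ^ n * Norm.norm (z - w) := by
  induction n with
  | zero => simp
  | succ n ih =>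
    have key : z ^ (n+1) - w ^ (n+1) = z * (z ^ n - w ^ n) + (z - w) * w ^ n := by ring
    rw [key]
    have h0 : (0:ℝ) ≤ R := by linarith
    calc Norm.norm (z * (z ^ n - w ^ n) + (z - w) * w ^ n)
        ≤ Norm.norm (z * (z ^ n - w ^ n)) + Norm.norm ((z - w) * w ^ n) := by
          exact norm_add_le _ _
      _ = Norm.norm z * Norm.norm (z ^ n - w ^ n)
            + Norm.norm (z - w) * Norm.norm w ^ n := by
          rw [norm_mul, norm_mul, norm_pow]
      _ ≤ R * (n * R ^ n * Norm.norm (z - w)) + Norm.norm (z - w) * R ^ n := by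
          gcongr
      _ = (n:ℝ) * R ^ (n+1) * Norm.norm (z - w) + Norm.norm (z - w) * R ^ n := by
          rw [pow_succ]; ring
      _ ≤ (n:ℝ) * R ^ (n+1) * Norm.norm (z - w) + Norm.norm (z - w) * R ^ (n+1) := by
          have h1 : R ^ n ≤ R ^ (n+1) := pow_le_pow_right₀ hR (by omega)
          have h2 : (0:ℝ) ≤ Norm.norm (z - w) := norm_nonneg _
          have h3 := mul_le_mul_of_nonneg_left h1 h2
          linarith
      _ = ((n:ℝ)+1) * R ^ (n+1) * Norm.norm (z - w) := by ring
      _ = (↑(n+1)) * R ^ (n+1) * Norm.norm (z - w) := by push_cast; ring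

lemma exp_I_near_one (x : ℝ) (m : ℤ) (h : |x - 2 * Real.pi * m| ≤ 1) :
    Norm.norm (Complex.exp (x * Complex.I) - 1) ≤ 2 * |x - 2 * Real.pi * m| := by
  have key : Complex.exp (x * Complex.I) = Complex.exp (((x - 2 * Real.pi * m : ℝ)) * Complex.I) := by
    rw [show ((x:ℂ) * Complex.I) = ((x - 2 * Real.pi * m : ℝ)) * Complex.I + (m : ℤ) * (2 * Real.pi * Complex.I) by
      push_cast; ring]
    rw [Complex.exp_add, Complex.exp_int_mul_two_pi_mul_I, mul_one]
  rw [key]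
  have habs : Norm.norm (((x - 2 * Real.pi * m : ℝ)) * Complex.I) = |x - 2 * Real.pi * m| := by
    rw [norm_mul, Complex.norm_I, mul_one, Complex.norm_real, Real.norm_eq_abs]
  calc Norm.norm (Complex.exp (((x - 2 * Real.pi * m : ℝ)) * Complex.I) - 1)
      ≤ 2 * Norm.norm (((x - 2 * Real.pi * m : ℝ)) * Complex.I) :=
        Complex.norm_exp_sub_one_le (by rw [habs]; exact h)
    _ = 2 * |x - 2 * Real.pi * m| := by rw [habs]


lemma helper_norm_exp_neg_mul (l : ℝ) (s : ℂ) :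
    ‖Complex.exp (-(l:ℂ) * s)‖ = Real.exp (-(l * s.re)) := by
  rw [Complex.norm_exp]
  congr 1
  simp [Complex.mul_re]

lemma helper_exp_split (l τ : ℝ) (s : ℂ) :
    Complex.exp (-(l:ℂ) * (s + τ * Complex.I)) =
      Complex.exp (-(l:ℂ) * s) * Complex.exp (((-(l * τ) : ℝ)) * Complex.I) := by
  rw [← Complex.exp_add]
  congr 1
  push_cast
  ring

set_option maxHeartbeats 4000000 in
/-- Theorem 2.1 (polynomial approximation via hybrid universality): if `L` is hybridly
universal, `K ⊂ D` is compact with connected complement, `f` is continuous and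
non-vanishing on `K` and analytic in its interior, and `P_s(z) = ∑_{j=0}^d c_j(s) z^j`
with `c_j` absolutely convergent general Dirichlet series and `c_d` not identically zero,
then the set of `τ ∈ [0,T]` with `max_{s ∈ K} |P_{s+iτ}(L(s+iτ)) − P_s(f(s))| < ε` has
positive lower density. -/
theorem polynomial_hybrid_approximation
    (L : ℂ → ℂ) (hL : HybridUniversal L)
    (K : Set ℂ) (hK : IsCompact K) (hKD : K ⊆ stripD) (hKc : IsPreconnected Kᶜ)
    (f : ℂ → ℂ) (hf : ContinuousOn f K) (hfne : ∀ s ∈ K, f s ≠ 0)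
    (hfa : DifferentiableOn ℂ f (interior K))
    (d : ℕ) (hd : 1 ≤ d) (c : ℕ → ℂ → ℂ)
    (hc : ∀ j ≤ d, IsGenDirichletSeries (c j))
    (hlead : ∃ s : ℂ, 1/2 < s.re ∧ c d s ≠ 0) :
    ∀ ε : ℝ, 0 < ε →
      0 < lowerDensity (fun τ =>
        ∀ s ∈ K, Norm.norm
          ((∑ j ∈ Finset.range (d + 1),
              c j (s + τ * Complex.I) * L (s + τ * Complex.I) ^ j) -
            ∑ j ∈ Finset.range (d + 1), c j s * f s ^ j) < ε) := by
  intro ε hε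
  rcases Set.eq_empty_or_nonempty K with hKe | hKne
  · have h := hL K hK hKD hKc f hf hfne hfa 0 (fun _ => 0) (fun _ => 0)
      linearIndependent_empty_type ε hε
    refine lt_of_lt_of_le h (lowerDensity_mono ?_)
    intro τ _ s hs
    rw [hKe] at hs
    exact absurd hs (Set.notMem_empty s)
  obtain ⟨s₀, hs₀K, hs₀min⟩ := hK.exists_isMinOn hKne Complex.continuous_re.continuousOn
  obtain ⟨s₁, hs₁K, hs₁max⟩ := hK.exists_isMaxOn hKne Complex.continuous_re.continuousOn
  set σ₀ := s₀.re with hσ₀def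
  set σ₁ := s₁.re with hσ₁def
  have hσ₀ : 1/2 < σ₀ := (hKD hs₀K).1
  have hσ₁ : 1/2 < σ₁ := (hKD hs₁K).1
  have hre : ∀ s ∈ K, σ₀ ≤ s.re ∧ s.re ≤ σ₁ := fun s hs => ⟨hs₀min hs, hs₁max hs⟩
  obtain ⟨F, hF⟩ := hK.exists_bound_of_continuousOn hf
  have hF0 : 0 ≤ F := le_trans (norm_nonneg (f s₀)) (hF s₀ hs₀K)
  set R := F + 1 with hRdef
  have hR : 1 ≤ R := by linarith
  have hR0 : 0 < R := by linarith
  have hcF : ∀ j : Fin (d+1), IsGenDirichletSeries (c j) :=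
    fun j => hc j (Nat.lt_succ_iff.mp j.isLt)
  choose a lam hal using hcF
  set g : Fin (d+1) → ℕ → ℝ := fun j n =>
    ‖a j n‖ * (Real.exp (-(lam j n * σ₀)) + Real.exp (-(lam j n * σ₁))) with hgdef
  have hg0 : ∀ j n, 0 ≤ g j n := fun j n => by positivity
  have hsum_at : ∀ (j : Fin (d+1)) (s : ℂ), 1/2 < s.re →
      Summable (fun n => ‖a j n‖ * Real.exp (-(lam j n * s.re))) := by
    intro j s hs
    have h := (hal j s hs).1
    refine h.congr fun n => ?_
    rw [norm_mul, helper_norm_exp_neg_mul]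
  have hgsum : ∀ j, Summable (g j) := by
    intro j
    have h1 := hsum_at j (σ₀ : ℂ) (by simpa using hσ₀)
    have h2 := hsum_at j (σ₁ : ℂ) (by simpa using hσ₁)
    simp only [Complex.ofReal_re] at h1 h2
    refine (h1.add h2).congr fun n => ?_
    simp only [hgdef]
    ring
  have hdom : ∀ (j : Fin (d+1)) (n : ℕ) (s : ℂ), σ₀ ≤ s.re → s.re ≤ σ₁ →
      ‖a j n * Complex.exp (-(lam j n : ℂ) * s)‖ ≤ g j n := by
    intro j n s h0 h1
    rw [norm_mul, helper_norm_exp_neg_mul]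
    have hexp : Real.exp (-(lam j n * s.re)) ≤
        Real.exp (-(lam j n * σ₀)) + Real.exp (-(lam j n * σ₁)) := by
      rcases le_total 0 (lam j n) with h | h
      · have hle : Real.exp (-(lam j n * s.re)) ≤ Real.exp (-(lam j n * σ₀)) :=
          Real.exp_le_exp.mpr (by nlinarith)
        linarith [Real.exp_pos (-(lam j n * σ₁))]
      · have hle : Real.exp (-(lam j n * s.re)) ≤ Real.exp (-(lam j n * σ₁)) :=
          Real.exp_le_exp.mpr (by nlinarith)
        linarith [Real.exp_pos (-(lam j n * σ₀))]
    exact mul_le_mul_of_nonneg_left hexp (norm_nonneg _)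
  set B : Fin (d+1) → ℝ := fun j => ∑' n, g j n with hBdef
  have hB0 : ∀ j, 0 ≤ B j := fun j => tsum_nonneg (hg0 j)
  set Bsum : ℝ := ∑ j : Fin (d+1), B j with hBsumdef
  have hBsum0 : 0 ≤ Bsum := Finset.sum_nonneg (fun j _ => hB0 j)
  have hBle : ∀ j, B j ≤ Bsum := fun j =>
    Finset.single_le_sum (fun i _ => hB0 i) (Finset.mem_univ j)
  have hcbound : ∀ (j : Fin (d+1)) (s : ℂ), σ₀ ≤ s.re → s.re ≤ σ₁ →
      Norm.norm (c j s) ≤ B j := by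
    intro j s h0 h1
    have hs : 1/2 < s.re := lt_of_lt_of_le hσ₀ h0
    rw [(hal j s hs).2]
    refine le_trans (norm_tsum_le_tsum_norm (hal j s hs).1) ?_
    exact Summable.tsum_le_tsum (fun n => hdom j n s h0 h1) (hal j s hs).1 (hgsum j)
  have hRd : (0:ℝ) < R ^ d := pow_pos hR0 d
  set η : ℝ := ε / (4 * ((d:ℝ)+1) * R ^ d) with hηdef
  have hη : 0 < η := by positivity
  have hNev : ∀ᶠ N in atTop, ∀ j : Fin (d+1), (∑' n, g j (n + N)) < η := by
    rw [Filter.eventually_all]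
    intro j
    exact (tendsto_sum_nat_add (g j)).eventually_lt_const hη
  obtain ⟨N, hN⟩ := hNev.exists
  obtain ⟨k, α, p, hα, hv⟩ :=
    exists_rational_structure (fun mn : Fin (d+1) × Fin N => lam mn.1 mn.2 / (2 * Real.pi))
  set P : ℝ := ∑ m : Fin (d+1) × Fin N, ∑ i, |(p m i : ℝ)| with hPdef
  have hP0 : 0 ≤ P := Finset.sum_nonneg fun m _ => Finset.sum_nonneg fun i _ => abs_nonneg _
  have hPle : ∀ m, (∑ i, |(p m i : ℝ)|) ≤ P := fun m =>
    Finset.single_le_sum (f := fun m => ∑ i, |(p m i : ℝ)|)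
      (fun m' _ => Finset.sum_nonneg fun i _ => abs_nonneg _) (Finset.mem_univ m)
  set C : ℝ := Bsum * ((d:ℝ)+1) * R ^ d + 4 * Real.pi * P * Bsum * R ^ d with hCdef
  have hπ := Real.pi_pos
  have hC0 : 0 ≤ C := by positivity
  set δ : ℝ := min (min 1 ((ε/2)/(C+1))) (1/(2*Real.pi*P+1)) with hδdef
  have hδ : 0 < δ := lt_min (lt_min one_pos (by positivity)) (by positivity)
  have hδ1 : δ ≤ 1 := le_trans (min_le_left _ _) (min_le_left _ _)
  have hδC : δ ≤ (ε/2)/(C+1) := le_trans (min_le_left _ _) (min_le_right _ _)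
  have hδP : 2*Real.pi*P*δ ≤ 1 := by
    have h1 : δ ≤ 1/(2*Real.pi*P+1) := min_le_right _ _
    have h2 : 0 < 2*Real.pi*P+1 := by positivity
    rw [le_div_iff₀ h2] at h1
    nlinarith
  have hmain := hL K hK hKD hKc f hf hfne hfa k α (fun _ => 0) hα δ hδ
  refine lt_of_lt_of_le hmain (lowerDensity_mono ?_)
  rintro τ ⟨hτ1, hτ2⟩ s hs
  set s' := s + (τ:ℂ) * Complex.I with hs'def
  have hs're : s'.re = s.re := by simp [hs'def]
  have hsre := hre s hs
  have hs2 : 1/2 < s.re := lt_of_lt_of_le hσ₀ hsre.1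
  have hs'2 : 1/2 < s'.re := by rw [hs're]; exact hs2
  set z := L s' with hzdef
  set w := f s with hwdef
  have hzw : Norm.norm (z - w) < δ := hτ1 s hs
  have hwR : Norm.norm w ≤ R := by
    have h1 := hF s hs
    calc ‖w‖ ≤ F := h1
      _ ≤ R := by rw [hRdef]; linarith
  have hzR : Norm.norm z ≤ R := by
    have h1 : Norm.norm z ≤ Norm.norm w + Norm.norm (z - w) := by
      calc Norm.norm z = Norm.norm (w + (z - w)) := by ring_nf
        _ ≤ Norm.norm w + Norm.norm (z - w) := norm_add_le _ _
    have h2 := hF s hs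
    rw [hRdef]
    have := hzw.le.trans hδ1
    calc Norm.norm z ≤ ‖w‖ + Norm.norm (z - w) := h1
      _ ≤ F + 1 := by linarith [h2]
  -- the Dirichlet series shift estimate
  have hDelta : ∀ j : Fin (d+1), Norm.norm (c j s' - c j s) ≤ 4*Real.pi*P*δ*(B j) + 2*η := by
    intro j
    have hsumm_s : Summable (fun n => a j n * Complex.exp (-(lam j n:ℂ) * s)) :=
      (hal j s hs2).1.of_norm
    have hsumm_s' : Summable (fun n => a j n * Complex.exp (-(lam j n:ℂ) * s')) :=
      (hal j s' hs'2).1.of_norm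
    set h : ℕ → ℂ := fun n => a j n * Complex.exp (-(lam j n:ℂ) * s) *
        (Complex.exp (((-(lam j n * τ) : ℝ)) * Complex.I) - 1) with hhdef
    have hexp_eq : ∀ n, a j n * Complex.exp (-(lam j n:ℂ) * s') =
        a j n * Complex.exp (-(lam j n:ℂ) * s) *
          Complex.exp (((-(lam j n * τ) : ℝ)) * Complex.I) := by
      intro n
      rw [hs'def, helper_exp_split]
      ring
    have hheq : ∀ n, h n = a j n * Complex.exp (-(lam j n:ℂ) * s')
        - a j n * Complex.exp (-(lam j n:ℂ) * s) := by
      intro n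
      rw [hexp_eq n]
      simp only [hhdef]
      ring
    have hsummh : Summable h := (hsumm_s'.sub hsumm_s).congr fun n => (hheq n).symm
    have hDval : c j s' - c j s = ∑' n, h n := by
      rw [(hal j s' hs'2).2, (hal j s hs2).2, ← Summable.tsum_sub hsumm_s' hsumm_s]
      exact (tsum_congr hheq).symm
    have hnorm2 : ∀ n, ‖h n‖ ≤ 2 * g j n := by
      intro n
      simp only [hhdef]
      rw [norm_mul]
      have hb1 : ‖a j n * Complex.exp (-(lam j n:ℂ) * s)‖ ≤ g j n := hdom j n s hsre.1 hsre.2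
      have hb2 : ‖Complex.exp (((-(lam j n * τ) : ℝ)) * Complex.I) - 1‖ ≤ 2 := by
        refine le_trans (norm_sub_le _ _) ?_
        have he1 : ‖Complex.exp (((-(lam j n * τ) : ℝ)) * Complex.I)‖ = 1 := by
          rw [Complex.norm_exp]
          simp
        rw [he1]
        norm_num
      calc ‖a j n * Complex.exp (-(lam j n:ℂ) * s)‖ *
            ‖Complex.exp (((-(lam j n * τ) : ℝ)) * Complex.I) - 1‖
          ≤ g j n * 2 := mul_le_mul hb1 hb2 (norm_nonneg _) (hg0 j n)
        _ = 2 * g j n := by ring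
    have hhead : ∀ n, n < N → ‖h n‖ ≤ g j n * (4*Real.pi*P*δ) := by
      intro n hn
      have hvm := hv (j, ⟨n, hn⟩)
      simp only at hvm
      have h2π : (0:ℝ) < 2*Real.pi := by positivity
      have hlam : lam j n = 2*Real.pi * ∑ i, (p (j, ⟨n, hn⟩) i : ℝ) * α i := by
        rw [div_eq_iff (ne_of_gt h2π)] at hvm
        rw [hvm]
        ring
      set r : Fin k → ℤ := fun i => round (τ * α i - 0) with hrdef
      set m' : ℤ := -∑ i, p (j, ⟨n, hn⟩) i * r i with hm'def
      have hsum_eq : ∑ i, (p (j,⟨n,hn⟩) i : ℝ) * (τ * α i - (r i : ℝ))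
          = τ * (∑ i, (p (j,⟨n,hn⟩) i : ℝ) * α i) - ∑ i, (p (j,⟨n,hn⟩) i : ℝ) * (r i : ℝ) := by
        rw [Finset.mul_sum, ← Finset.sum_sub_distrib]
        refine Finset.sum_congr rfl fun i _ => by ring
      have hkey : (-(lam j n * τ)) - 2*Real.pi*(m' : ℝ)
          = -(2*Real.pi) * (∑ i, (p (j,⟨n,hn⟩) i : ℝ) * (τ * α i - (r i : ℝ))) := by
        rw [hsum_eq, hlam, hm'def]
        push_cast
        ring
      have hxdist : |(-(lam j n * τ)) - 2*Real.pi*(m' : ℝ)| ≤ 2*Real.pi*P*δ := by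
        rw [hkey, abs_mul, abs_neg, abs_of_pos h2π]
        have habs : |∑ i, (p (j,⟨n,hn⟩) i : ℝ) * (τ * α i - (r i : ℝ))| ≤ P * δ := by
          refine le_trans (Finset.abs_sum_le_sum_abs _ _) ?_
          have hterm : ∀ i ∈ Finset.univ,
              |(p (j,⟨n,hn⟩) i : ℝ) * (τ * α i - (r i : ℝ))| ≤ |(p (j,⟨n,hn⟩) i : ℝ)| * δ := by
            intro i _
            rw [abs_mul]
            refine mul_le_mul_of_nonneg_left ?_ (abs_nonneg _)
            have hti := (hτ2 i).le
            simp only [distToInt, sub_zero] at hti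
            simpa [hrdef, sub_zero] using hti
          refine le_trans (Finset.sum_le_sum hterm) ?_
          rw [← Finset.sum_mul]
          exact mul_le_mul_of_nonneg_right (hPle _) hδ.le
        calc 2*Real.pi * |∑ i, (p (j,⟨n,hn⟩) i : ℝ) * (τ * α i - (r i : ℝ))|
            ≤ 2*Real.pi * (P*δ) := mul_le_mul_of_nonneg_left habs (by positivity)
          _ = 2*Real.pi*P*δ := by ring
      have hx1 : |(-(lam j n * τ)) - 2*Real.pi*(m' : ℝ)| ≤ 1 := le_trans hxdist hδP
      have hexp1 := exp_I_near_one (-(lam j n * τ)) m' hx1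
      simp only [hhdef]
      rw [norm_mul]
      have hb1 : ‖a j n * Complex.exp (-(lam j n:ℂ) * s)‖ ≤ g j n := hdom j n s hsre.1 hsre.2
      have hb2 : ‖Complex.exp (((-(lam j n * τ) : ℝ)) * Complex.I) - 1‖ ≤ 4*Real.pi*P*δ := by
        calc Norm.norm (Complex.exp (((-(lam j n * τ) : ℝ)) * Complex.I) - 1)
            ≤ 2 * |(-(lam j n * τ)) - 2*Real.pi*(m' : ℝ)| := hexp1
          _ ≤ 2 * (2*Real.pi*P*δ) := by linarith
          _ = 4*Real.pi*P*δ := by ring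
      exact mul_le_mul hb1 hb2 (norm_nonneg _) (hg0 j n)
    rw [hDval]
    have hsplit := Summable.sum_add_tsum_nat_add N hsummh
    have hsummnorm : Summable (fun n => ‖h n‖) :=
      Summable.of_nonneg_of_le (fun n => norm_nonneg _) hnorm2 ((hgsum j).mul_left 2)
    have htailnorm : Summable (fun n => ‖h (n+N)‖) := (summable_nat_add_iff N).2 hsummnorm
    have hgtail : Summable (fun n => g j (n+N)) := (summable_nat_add_iff N).2 (hgsum j)
    calc ‖∑' n, h n‖ = ‖(∑ n ∈ Finset.range N, h n) + ∑' n, h (n+N)‖ := by rw [hsplit]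
      _ ≤ ‖∑ n ∈ Finset.range N, h n‖ + ‖∑' n, h (n+N)‖ := norm_add_le _ _
      _ ≤ (∑ n ∈ Finset.range N, ‖h n‖) + ∑' n, ‖h (n+N)‖ :=
          add_le_add (norm_sum_le _ _) (norm_tsum_le_tsum_norm htailnorm)
      _ ≤ (∑ n ∈ Finset.range N, g j n * (4*Real.pi*P*δ)) + ∑' n, 2 * g j (n+N) :=
          add_le_add (Finset.sum_le_sum fun n hn => hhead n (Finset.mem_range.mp hn))
            (Summable.tsum_le_tsum (fun n => hnorm2 (n+N)) htailnorm (hgtail.mul_left 2))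
      _ ≤ B j * (4*Real.pi*P*δ) + 2*η := by
          refine add_le_add ?_ ?_
          · rw [← Finset.sum_mul]
            exact mul_le_mul_of_nonneg_right
              (Summable.sum_le_tsum (Finset.range N) (fun n _ => hg0 j n) (hgsum j)) (by positivity)
          · rw [tsum_mul_left]
            exact mul_le_mul_of_nonneg_left (hN j).le (by norm_num)
      _ = 4*Real.pi*P*δ*(B j) + 2*η := by ring
  -- termwise bound
  have key : ∀ j : Fin (d+1),
      Norm.norm (c j s' * z^(j:ℕ) - c j s * w^(j:ℕ)) ≤
        B j * (((d:ℝ)+1) * R^d * δ) + (4*Real.pi*P*δ*(B j) + 2*η) * R^d := by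
    intro j
    have hjd : (j:ℕ) ≤ d := Nat.lt_succ_iff.mp j.isLt
    have hsplitj : c j s' * z^(j:ℕ) - c j s * w^(j:ℕ)
        = c j s' * (z^(j:ℕ) - w^(j:ℕ)) + (c j s' - c j s) * w^(j:ℕ) := by ring
    rw [hsplitj]
    refine le_trans (norm_add_le _ _) ?_
    rw [norm_mul, norm_mul]
    have h1 : Norm.norm (c j s') ≤ B j :=
      hcbound j s' (by rw [hs're]; exact hsre.1) (by rw [hs're]; exact hsre.2)
    have hpow : R^(j:ℕ) ≤ R^d := pow_le_pow_right₀ hR hjd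
    have h2 : Norm.norm (z^(j:ℕ) - w^(j:ℕ)) ≤ ((d:ℝ)+1) * R^d * δ := by
      refine le_trans (pow_diff_bound z w R hR hzR hwR (j:ℕ)) ?_
      have hj' : ((j:ℕ):ℝ) ≤ (d:ℝ)+1 := by
        have : ((j:ℕ):ℝ) ≤ (d:ℝ) := by exact_mod_cast hjd
        linarith
      have hleft : ((j:ℕ):ℝ) * R^(j:ℕ) ≤ ((d:ℝ)+1) * R^d :=
        mul_le_mul hj' hpow (pow_nonneg hR0.le _) (by positivity)
      exact mul_le_mul hleft hzw.le (norm_nonneg _) (by positivity)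
    have h3 : Norm.norm (w^(j:ℕ)) ≤ R^d := by
      rw [norm_pow]
      calc Norm.norm w ^ (j:ℕ) ≤ R ^ (j:ℕ) := pow_le_pow_left₀ (norm_nonneg _) hwR _
        _ ≤ R^d := hpow
    have hterm2nonneg : (0:ℝ) ≤ 4*Real.pi*P*δ*(B j) + 2*η :=
      add_nonneg (mul_nonneg (by positivity) (hB0 j)) (by linarith)
    exact add_le_add (mul_le_mul h1 h2 (norm_nonneg _) (hB0 j))
      (mul_le_mul (hDelta j) h3 (norm_nonneg _) hterm2nonneg)
  -- sum up
  have hd1 : (0:ℝ) < (d:ℝ)+1 := by positivity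
  have hsum_est : Norm.norm
      ((∑ j ∈ Finset.range (d + 1), c j s' * z ^ j) - ∑ j ∈ Finset.range (d + 1), c j s * w ^ j)
      ≤ δ * C + ε/2 := by
    rw [← Fin.sum_univ_eq_sum_range (fun j => c j s' * z ^ j) (d+1),
        ← Fin.sum_univ_eq_sum_range (fun j => c j s * w ^ j) (d+1),
        ← Finset.sum_sub_distrib]
    refine le_trans (norm_sum_le _ _) ?_
    refine le_trans (Finset.sum_le_sum fun j _ => key j) ?_
    have hexpand : ∑ j : Fin (d+1), (B j * (((d:ℝ)+1) * R^d * δ) + (4*Real.pi*P*δ*(B j) + 2*η) * R^d)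
        = Bsum * (((d:ℝ)+1) * R^d * δ) + 4*Real.pi*P*δ*Bsum*R^d + ((d:ℝ)+1)*(2*η*R^d) := by
      have hstep : ∀ j ∈ (Finset.univ : Finset (Fin (d+1))),
          B j * (((d:ℝ)+1) * R^d * δ) + (4*Real.pi*P*δ*(B j) + 2*η) * R^d
            = (((d:ℝ)+1) * R^d * δ + 4*Real.pi*P*δ*R^d) * B j + 2*η*R^d :=
        fun j _ => by ring
      rw [Finset.sum_congr rfl hstep, Finset.sum_add_distrib, ← Finset.mul_sum,
        Finset.sum_const, Finset.card_univ, Fintype.card_fin, hBsumdef, nsmul_eq_mul]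
      push_cast
      ring
    rw [hexpand]
    have hη_eq : ((d:ℝ)+1)*(2*η*R^d) = ε/2 := by
      rw [hηdef]
      field_simp
      ring
    rw [hη_eq, hCdef]
    ring_nf
    nlinarith [hRd, hδ, hBsum0, hP0, hπ]
  have hfin : δ * C < ε/2 := by
    have h1 := hδC
    rw [le_div_iff₀ (by positivity : (0:ℝ) < C+1)] at h1
    nlinarith
  calc Norm.norm ((∑ j ∈ Finset.range (d + 1), c j s' * z ^ j)
        - ∑ j ∈ Finset.range (d + 1), c j s * w ^ j) ≤ δ * C + ε/2 := hsum_est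
    _ < ε := by linarith
end

section
/- Let f(s) = Σ_{n=1}^∞ a_n e^{−λ_n s} be a general Dirichlet series (a_n ∈ ℂ, λ_n ∈ ℝ) which converges absolutely at a point s₀ ∈ ℂ. Then for every ε > 0, liminf_{T→∞} (1/T)·μ{ τ ∈ [0,T] : | Σ_{n=1}^∞ a_n e^{−λ_n (s₀+iτ)} − Σ_{n=1}^∞ a_n e^{−λ_n s₀} | < ε } > 0, where μ denotes Lebesgue measure. -/
open MeasureTheory Filter Complex
open Finset

set_option maxHeartbeats 1000000

def IsTrigPoly (f : ℝ → ℂ) (c : ℝ) : Prop :=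
  ∃ (s : Finset ℕ) (p : ℕ → ℝ) (μ : ℕ → ℝ),
    (∀ i ∈ s, 0 ≤ p i) ∧
    (∀ τ : ℝ, f τ = ∑ i ∈ s, (p i : ℂ) * Complex.exp ((μ i * τ : ℝ) * Complex.I)) ∧
    c ≤ ∑ i ∈ s.filter (fun i => μ i = 0), p i

lemma IsTrigPoly.mul {f g : ℝ → ℂ} {c d : ℝ} (hc : 0 ≤ c) (hd : 0 ≤ d)
    (hf : IsTrigPoly f c) (hg : IsTrigPoly g d) :
    IsTrigPoly (fun τ => f τ * g τ) (c * d) := by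
  obtain ⟨s, p, μ, hp, hfe, hcs⟩ := hf
  obtain ⟨t, q, ν, hq, hge, hds⟩ := hg
  have hinj : ∀ x ∈ s ×ˢ t, ∀ y ∈ s ×ˢ t,
      Nat.pair x.1 x.2 = Nat.pair y.1 y.2 → x = y := by
    intro x _ y _ h
    have := congrArg Nat.unpair h
    simpa [Nat.unpair_pair, Prod.ext_iff] using this
  refine ⟨(s ×ˢ t).image (fun z => Nat.pair z.1 z.2),
    fun n => p (Nat.unpair n).1 * q (Nat.unpair n).2,
    fun n => μ (Nat.unpair n).1 + ν (Nat.unpair n).2, ?_, ?_, ?_⟩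
  · intro i hi
    simp only [Finset.mem_image] at hi
    obtain ⟨z, hz, rfl⟩ := hi
    simp only [Finset.mem_product] at hz
    simp only [Nat.unpair_pair]
    exact mul_nonneg (hp _ hz.1) (hq _ hz.2)
  · intro τ
    show f τ * g τ = _
    rw [hfe τ, hge τ, Finset.sum_mul_sum, Finset.sum_image hinj, ← Finset.sum_product']
    refine Finset.sum_congr rfl fun z hz => ?_
    simp only [Nat.unpair_pair]
    push_cast
    rw [add_mul, add_mul, Complex.exp_add]
    ring
  · calc c * d ≤ (∑ i ∈ s.filter (fun i => μ i = 0), p i) *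
        (∑ j ∈ t.filter (fun j => ν j = 0), q j) := by
          apply mul_le_mul hcs hds hd
          exact Finset.sum_nonneg fun i hi => hp i (Finset.mem_filter.mp hi).1
      _ = ∑ z ∈ (s.filter (fun i => μ i = 0)) ×ˢ (t.filter (fun j => ν j = 0)),
            p z.1 * q z.2 := by rw [Finset.sum_mul_sum, ← Finset.sum_product']
      _ = ∑ n ∈ ((s.filter (fun i => μ i = 0)) ×ˢ (t.filter (fun j => ν j = 0))).image
            (fun z => Nat.pair z.1 z.2),
            p (Nat.unpair n).1 * q (Nat.unpair n).2 := by
          rw [Finset.sum_image]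
          · refine Finset.sum_congr rfl fun z hz => by simp only [Nat.unpair_pair]
          · intro x hx y hy h
            have := congrArg Nat.unpair h
            simpa [Nat.unpair_pair, Prod.ext_iff] using this
      _ ≤ _ := by
          apply Finset.sum_le_sum_of_subset_of_nonneg
          · intro n hn
            simp only [Finset.mem_image, Finset.mem_filter, Finset.mem_product] at hn ⊢
            obtain ⟨z, ⟨⟨hz1, hμ⟩, ⟨hz2, hν⟩⟩, rfl⟩ := hn
            exact ⟨⟨z, ⟨hz1, hz2⟩, rfl⟩, by
              simp only [Nat.unpair_pair]; simp [hμ, hν]⟩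
          · intro n hn _
            simp only [Finset.mem_filter, Finset.mem_image, Finset.mem_product] at hn
            obtain ⟨⟨z, hz, rfl⟩, _⟩ := hn
            simp only [Nat.unpair_pair]
            exact mul_nonneg (hp _ hz.1) (hq _ hz.2)

lemma IsTrigPoly.one : IsTrigPoly (fun _ => 1) 1 := by
  refine ⟨{0}, fun _ => 1, fun _ => 0, by simp, by simp, by simp⟩

lemma IsTrigPoly.prod {ι : Type*} (s : Finset ι) (g : ι → ℝ → ℂ) (c : ι → ℝ)
    (hc : ∀ i, 0 ≤ c i) (h : ∀ i ∈ s, IsTrigPoly (g i) (c i)) :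
    IsTrigPoly (fun τ => ∏ i ∈ s, g i τ) (∏ i ∈ s, c i) := by
  classical
  induction s using Finset.induction_on with
  | empty => simpa using IsTrigPoly.one
  | @insert x t hx ih =>
    simp only [Finset.prod_insert hx]
    exact (h x (Finset.mem_insert_self x t)).mul (hc x)
      (Finset.prod_nonneg fun i _ => hc i)
      (ih fun i hi => h i (Finset.mem_insert_of_mem hi))

lemma isTrigPoly_cospow (l : ℝ) (m : ℕ) :
    IsTrigPoly (fun τ => ((((1 + Real.cos (l * τ)) / 2) ^ m : ℝ) : ℂ))
      ((2 * m).choose m / 4 ^ m) := by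
  refine ⟨Finset.range (2 * m + 1), fun k => (2 * m).choose k / 4 ^ m,
    fun k => ((k : ℝ) - m) * l, ?_, ?_, ?_⟩
  · intro k _
    positivity
  · intro τ
    have h1 : ((((1 + Real.cos (l * τ)) / 2) ^ m : ℝ) : ℂ)
        = Complex.cos ((l * τ : ℝ) / 2) ^ (2 * m) := by
      push_cast
      rw [pow_mul, Complex.cos_sq]
      norm_num
      ring_nf
    show ((((1 + Real.cos (l * τ)) / 2) ^ m : ℝ) : ℂ) = _
    rw [h1, Complex.cos]
    rw [div_pow, add_pow]
    rw [Finset.sum_div]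
    refine Finset.sum_congr rfl fun k hk => ?_
    have hk' : k ≤ 2 * m := by
      simpa [Nat.lt_succ_iff] using Finset.mem_range.mp hk
    rw [← Complex.exp_nat_mul, ← Complex.exp_nat_mul, ← Complex.exp_add]
    have h2 : (2:ℂ) ^ (2*m) = 4 ^ m := by
      rw [pow_mul]; norm_num
    rw [h2]
    have h3 : (k : ℂ) * (((l * τ : ℝ) : ℂ) / 2 * Complex.I)
        + ((2*m - k : ℕ) : ℂ) * (-(((l * τ : ℝ) : ℂ) / 2) * Complex.I)
        = ((((k : ℝ) - m) * l * τ : ℝ) : ℂ) * Complex.I := by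
      have : ((2*m - k : ℕ) : ℂ) = 2 * m - k := by
        push_cast [Nat.cast_sub hk']; ring
      rw [this]
      push_cast
      ring
    rw [h3]
    push_cast
    ring
  · apply Finset.single_le_sum (f := fun k => ((2 * m).choose k / 4 ^ m : ℝ))
    · intro k _
      positivity
    · simp only [Finset.mem_filter, Finset.mem_range]
      exact ⟨by omega, by simp⟩

lemma IsTrigPoly.mean {f : ℝ → ℂ} {c : ℝ} (hf : IsTrigPoly f c) :
    ∃ L : ℝ, c ≤ L ∧
      Tendsto (fun T : ℝ => (∫ τ in (0:ℝ)..T, f τ) / (T:ℂ)) atTop (nhds (L:ℂ)) := by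
  classical
  obtain ⟨s, p, μ, hp, hfe, hcs⟩ := hf
  refine ⟨∑ i ∈ s.filter (fun i => μ i = 0), p i, hcs, ?_⟩
  have hint : ∀ (i : ℕ) (T : ℝ), IntervalIntegrable
      (fun τ : ℝ => (p i : ℂ) * Complex.exp ((μ i * τ : ℝ) * Complex.I)) volume 0 T := by
    intro i T
    apply Continuous.intervalIntegrable
    continuity
  have key : ∀ i ∈ s, Tendsto
      (fun T : ℝ => (∫ τ in (0:ℝ)..T, (p i : ℂ) * Complex.exp ((μ i * τ : ℝ) * Complex.I)) / T)
      atTop (nhds (if μ i = 0 then (p i : ℂ) else 0)) := by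
    intro i hi
    by_cases hμ : μ i = 0
    · rw [if_pos hμ]
      have : ∀ T : ℝ, (∫ τ in (0:ℝ)..T, (p i : ℂ) * Complex.exp ((μ i * τ : ℝ) * Complex.I))
          = p i * T := by
        intro T
        simp [hμ, mul_comm]
      refine Tendsto.congr' ?_ tendsto_const_nhds
      filter_upwards [eventually_gt_atTop (0:ℝ)] with T hT
      rw [this T, mul_div_assoc, div_self (by exact_mod_cast hT.ne'), mul_one]
    · rw [if_neg hμ]
      have hexp : ∀ T : ℝ, (∫ τ in (0:ℝ)..T, (p i : ℂ) * Complex.exp ((μ i * τ : ℝ) * Complex.I))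
          = p i * ((Complex.exp ((μ i : ℂ) * Complex.I * T) - 1) / ((μ i : ℂ) * Complex.I)) := by
        intro T
        rw [intervalIntegral.integral_const_mul]
        have : (fun τ : ℝ => Complex.exp ((μ i * τ : ℝ) * Complex.I))
            = fun τ : ℝ => Complex.exp (((μ i : ℂ) * Complex.I) * τ) := by
          funext τ; push_cast; ring_nf
        rw [this, integral_exp_mul_complex (by simp [hμ])]
        simp
      have hbound : ∀ᶠ T : ℝ in atTop, ‖(∫ τ in (0:ℝ)..T,
          (p i : ℂ) * Complex.exp ((μ i * τ : ℝ) * Complex.I)) / T‖ ≤ (p i * (2 / |μ i|)) / T := by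
        filter_upwards [eventually_gt_atTop (0:ℝ)] with T hT
        rw [hexp T]
        rw [norm_div, norm_mul, norm_div]
        have h1 : ‖Complex.exp ((μ i : ℂ) * Complex.I * T) - 1‖ ≤ 2 := by
          calc ‖Complex.exp ((μ i : ℂ) * Complex.I * T) - 1‖
              ≤ ‖Complex.exp ((μ i : ℂ) * Complex.I * T)‖ + ‖(1:ℂ)‖ := norm_sub_le _ _
            _ ≤ 2 := by
                rw [Complex.norm_exp]
                have : ((μ i : ℂ) * Complex.I * T).re = 0 := by simp
                rw [this]
                norm_num
        have h2 : ‖(μ i : ℂ) * Complex.I‖ = |μ i| := by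
          simp
        have h3 : ‖(T:ℂ)‖ = T := by
          rw [Complex.norm_real, Real.norm_eq_abs, abs_of_pos hT]
        rw [h2, h3, Complex.norm_real, Real.norm_eq_abs, _root_.abs_of_nonneg (hp i hi)]
        gcongr <;> first
          | exact hp i hi
          | exact h1
      refine squeeze_zero_norm' hbound ?_
      have : Tendsto (fun T : ℝ => (p i * (2 / |μ i|)) / T) atTop (nhds 0) :=
        tendsto_const_nhds.div_atTop tendsto_id
      exact this
  have := tendsto_finset_sum s key
  have heq : ∀ᶠ T : ℝ in atTop, (∫ τ in (0:ℝ)..T, f τ) / (T:ℂ)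
      = ∑ i ∈ s, (∫ τ in (0:ℝ)..T, (p i : ℂ) * Complex.exp ((μ i * τ : ℝ) * Complex.I)) / T := by
    filter_upwards with T
    rw [← Finset.sum_div]
    congr 1
    rw [← intervalIntegral.integral_finset_sum (fun i _ => hint i T)]
    exact intervalIntegral.integral_congr fun τ _ => hfe τ
  rw [show ((∑ i ∈ s.filter (fun i => μ i = 0), p i : ℝ) : ℂ)
      = ∑ i ∈ s, (if μ i = 0 then (p i : ℂ) else 0) by
    push_cast [Finset.sum_filter]
    exact Finset.sum_congr rfl fun i _ => by split <;> simp]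
  exact Tendsto.congr' (Filter.EventuallyEq.symm heq) this

lemma four_pow_le (m : ℕ) : (4:ℝ) ^ m ≤ (2 * m + 1) * (2 * m).choose m := by
  have h : (4:ℕ) ^ m ≤ (2 * m + 1) * (2 * m).choose m := by
    calc (4:ℕ) ^ m = 2 ^ (2 * m) := by rw [pow_mul]; norm_num
      _ = ∑ k ∈ Finset.range (2 * m + 1), (2 * m).choose k := (Nat.sum_range_choose (2*m)).symm
      _ ≤ ∑ _k ∈ Finset.range (2 * m + 1), (2 * m).choose m := by
          apply Finset.sum_le_sum
          intro k _
          have := Nat.choose_le_middle k (2 * m)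
          simpa using this
      _ = (2 * m + 1) * (2 * m).choose m := by
          rw [Finset.sum_const, Finset.card_range, smul_eq_mul]
  exact_mod_cast h


lemma kernel_density (lam : ℕ → ℝ) (N : ℕ) {η : ℝ} (hη : 0 < η) (hη1 : η < 1) :
    ∃ β : ℝ, 0 < β ∧ ∀ᶠ T : ℝ in atTop,
      β ≤ (volume {τ ∈ Set.Icc (0:ℝ) T |
        ∀ n < N, 1 - η ≤ (1 + Real.cos (lam n * τ)) / 2}).toReal / T := by
  -- choose m with (2m+1)^N * (1-η)^m < 1, m ≥ 1
  obtain ⟨m, hm1, hm⟩ : ∃ m : ℕ, 1 ≤ m ∧ ((2*(m:ℝ)+1))^N * (1-η)^m < 1 := by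
    have h1 : Tendsto (fun m : ℕ => (3:ℝ)^N * ((m:ℝ)^N * (1-η)^m)) atTop (nhds 0) := by
      have := tendsto_pow_const_mul_const_pow_of_lt_one N (by linarith : (0:ℝ) ≤ 1 - η)
        (by linarith : (1:ℝ) - η < 1)
      simpa using this.const_mul ((3:ℝ)^N)
    have h2 := (h1.eventually (eventually_lt_nhds zero_lt_one)).and (eventually_ge_atTop 1)
    obtain ⟨m, hlt, hm1⟩ := h2.exists
    refine ⟨m, hm1, ?_⟩
    have hmr : (1:ℝ) ≤ (m:ℝ) := by exact_mod_cast hm1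
    have hb : ((2*(m:ℝ)+1))^N ≤ (3:ℝ)^N * (m:ℝ)^N := by
      rw [← mul_pow]
      apply pow_le_pow_left₀ (by linarith)
      linarith
    calc ((2*(m:ℝ)+1))^N * (1-η)^m ≤ (3:ℝ)^N * (m:ℝ)^N * (1-η)^m := by
          exact mul_le_mul_of_nonneg_right hb (pow_nonneg (by linarith) m)
      _ = (3:ℝ)^N * ((m:ℝ)^N * (1-η)^m) := by ring
      _ < 1 := hlt
  set r : ℝ := (2*m).choose m / 4^m with hr
  have hrpos : 0 < r := by
    have h0 : (0:ℝ) < (2*m).choose m := by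
      exact_mod_cast Nat.choose_pos (by omega : m ≤ 2*m)
    positivity
  set κ : ℝ := r ^ N with hκ
  set δ : ℝ := (1-η)^m with hδ
  have hδ0 : 0 ≤ δ := pow_nonneg (by linarith) m
  have hδκ : δ < κ := by
    have hinv : ((2*(m:ℝ)+1))⁻¹ ≤ r := by
      rw [le_div_iff₀ (by positivity)]
      rw [inv_mul_le_iff₀ (by positivity)]
      have := four_pow_le m
      push_cast at this ⊢
      linarith
    have h2 : ((2*(m:ℝ)+1))⁻¹^N ≤ κ := pow_le_pow_left₀ (by positivity) hinv N
    refine lt_of_lt_of_le ?_ h2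
    have hx : (0:ℝ) < (2*(m:ℝ)+1)^N := by positivity
    rw [inv_pow, inv_eq_one_div, lt_div_iff₀ hx, mul_comm]
    exact hm
  -- the kernel
  set φ : ℝ → ℝ := fun τ => ∏ n ∈ Finset.range N, ((1 + Real.cos (lam n * τ)) / 2) ^ m with hφ
  have hφcont : Continuous φ := by
    apply continuous_finset_prod
    intro n _
    exact ((continuous_const.add (Real.continuous_cos.comp (continuous_const.mul continuous_id))).div_const 2).pow m
  have hfac01 : ∀ (n : ℕ) (τ : ℝ), 0 ≤ (1 + Real.cos (lam n * τ)) / 2 ∧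
      (1 + Real.cos (lam n * τ)) / 2 ≤ 1 := by
    intro n τ
    constructor
    · have := Real.neg_one_le_cos (lam n * τ)
      linarith
    · have := Real.cos_le_one (lam n * τ)
      linarith
  have hφ0 : ∀ τ, 0 ≤ φ τ := fun τ =>
    Finset.prod_nonneg fun n _ => pow_nonneg (hfac01 n τ).1 m
  have hφ1 : ∀ τ, φ τ ≤ 1 := fun τ =>
    Finset.prod_le_one (fun n _ => pow_nonneg (hfac01 n τ).1 m)
      (fun n _ => pow_le_one₀ (hfac01 n τ).1 (hfac01 n τ).2)
  -- trig poly structure and mean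
  have htp : IsTrigPoly (fun τ => ((φ τ : ℝ) : ℂ)) κ := by
    have hprod := IsTrigPoly.prod (Finset.range N)
      (fun n τ => ((((1 + Real.cos (lam n * τ)) / 2) ^ m : ℝ) : ℂ))
      (fun _ => r) (fun _ => hrpos.le)
      (fun n _ => isTrigPoly_cospow (lam n) m)
    have heq : (fun τ => ∏ n ∈ Finset.range N,
        ((((1 + Real.cos (lam n * τ)) / 2) ^ m : ℝ) : ℂ)) = fun τ => ((φ τ : ℝ) : ℂ) := by
      funext τ
      rw [hφ]
      push_cast
      rfl
    rw [heq] at hprod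
    simpa [hκ, hr, div_pow] using hprod
  obtain ⟨L, hκL, hTend⟩ := htp.mean
  have hTendR : Tendsto (fun T : ℝ => (∫ τ in (0:ℝ)..T, φ τ) / T) atTop (nhds L) := by
    rw [← Filter.tendsto_ofReal_iff]
    convert hTend using 2 with T
    rw [intervalIntegral.integral_ofReal]
    push_cast
    ring
  -- the good set
  set S : Set ℝ := {τ : ℝ | ∀ n < N, 1 - η ≤ (1 + Real.cos (lam n * τ)) / 2} with hS
  have hSmeas : MeasurableSet S := by
    have : S = ⋂ n : ℕ, {τ : ℝ | n < N → 1 - η ≤ (1 + Real.cos (lam n * τ)) / 2} := by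
      ext τ
      simp [hS, Set.mem_iInter]
    rw [this]
    apply MeasurableSet.iInter
    intro n
    by_cases hn : n < N
    · simp only [hn, true_implies]
      exact (isClosed_le continuous_const ((continuous_const.add (Real.continuous_cos.comp (continuous_const.mul continuous_id))).div_const 2)).measurableSet
    · simp [hn]
  have hφoff : ∀ τ, τ ∉ S → φ τ ≤ δ := by
    intro τ hτ
    simp only [hS, Set.mem_setOf_eq, not_forall] at hτ
    obtain ⟨n, hn, hlt⟩ := hτ
    push_neg at hlt
    calc φ τ = ((1 + Real.cos (lam n * τ)) / 2) ^ m *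
          ∏ k ∈ (Finset.range N).erase n, ((1 + Real.cos (lam k * τ)) / 2) ^ m :=
        (Finset.mul_prod_erase _ _ (Finset.mem_range.mpr hn)).symm
      _ ≤ δ * 1 := by
          apply mul_le_mul
          · exact pow_le_pow_left₀ (hfac01 n τ).1 (by linarith) m
          · exact Finset.prod_le_one (fun k _ => pow_nonneg (hfac01 k τ).1 m)
              (fun k _ => pow_le_one₀ (hfac01 k τ).1 (hfac01 k τ).2)
          · exact Finset.prod_nonneg fun k _ => pow_nonneg (hfac01 k τ).1 m
          · exact hδ0
      _ = δ := mul_one δ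
  -- integral bound
  have hbound : ∀ T : ℝ, 0 < T →
      (∫ τ in (0:ℝ)..T, φ τ) ≤ (volume {τ ∈ Set.Icc (0:ℝ) T |
        ∀ n < N, 1 - η ≤ (1 + Real.cos (lam n * τ)) / 2}).toReal + δ * T := by
    intro T hT
    have hIoc : IntegrableOn φ (Set.Ioc 0 T) volume :=
      (hφcont.integrableOn_Ioc)
    rw [intervalIntegral.integral_of_le hT.le]
    rw [← MeasureTheory.integral_inter_add_diff hSmeas hIoc]
    have h1 : ∫ τ in Set.Ioc 0 T ∩ S, φ τ ≤ (volume {τ ∈ Set.Icc (0:ℝ) T |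
        ∀ n < N, 1 - η ≤ (1 + Real.cos (lam n * τ)) / 2}).toReal := by
      have hsub : Set.Ioc 0 T ∩ S ⊆ {τ ∈ Set.Icc (0:ℝ) T |
          ∀ n < N, 1 - η ≤ (1 + Real.cos (lam n * τ)) / 2} := by
        intro τ hτ
        exact ⟨Set.Ioc_subset_Icc_self hτ.1, hτ.2⟩
      calc ∫ τ in Set.Ioc 0 T ∩ S, φ τ ≤ ∫ _τ in Set.Ioc 0 T ∩ S, (1:ℝ) := by
            apply MeasureTheory.setIntegral_mono_on
              (hIoc.mono_set Set.inter_subset_left)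
              ((MeasureTheory.integrableOn_const_iff).mpr
                (Or.inr (lt_of_le_of_lt (measure_mono Set.inter_subset_left) measure_Ioc_lt_top)))
              (measurableSet_Ioc.inter hSmeas)
            intro τ _
            exact hφ1 τ
        _ = (volume (Set.Ioc 0 T ∩ S)).toReal := by
            rw [MeasureTheory.setIntegral_const]
            simp [measureReal_def]
        _ ≤ _ := by
            apply ENNReal.toReal_mono
            · apply ne_of_lt
              apply lt_of_le_of_lt (measure_mono (Set.sep_subset _ _))
              rw [Real.volume_Icc]
              exact ENNReal.ofReal_lt_top
            · exact measure_mono hsub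
    have h2 : ∫ τ in Set.Ioc 0 T \ S, φ τ ≤ δ * T := by
      calc ∫ τ in Set.Ioc 0 T \ S, φ τ ≤ ∫ _τ in Set.Ioc 0 T \ S, δ := by
            apply MeasureTheory.setIntegral_mono_on
              (hIoc.mono_set Set.diff_subset)
              ((MeasureTheory.integrableOn_const_iff).mpr
                (Or.inr (lt_of_le_of_lt (measure_mono Set.diff_subset) measure_Ioc_lt_top)))
              (measurableSet_Ioc.diff hSmeas)
            intro τ hτ
            exact hφoff τ hτ.2
        _ = (volume (Set.Ioc 0 T \ S)).toReal * δ := by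
            rw [MeasureTheory.setIntegral_const]
            simp [mul_comm, measureReal_def]
        _ ≤ T * δ := by
            apply mul_le_mul_of_nonneg_right _ hδ0
            have : (volume (Set.Ioc 0 T \ S)).toReal ≤ (volume (Set.Ioc (0:ℝ) T)).toReal := by
              apply ENNReal.toReal_mono (ne_of_lt measure_Ioc_lt_top)
              exact measure_mono Set.diff_subset
            rw [Real.volume_Ioc, sub_zero, ENNReal.toReal_ofReal hT.le] at this
            linarith
        _ = δ * T := mul_comm _ _
    linarith
  -- conclude
  refine ⟨(κ - δ) / 2, by linarith, ?_⟩
  have hev1 : ∀ᶠ T : ℝ in atTop, L - (κ - δ) / 2 < (∫ τ in (0:ℝ)..T, φ τ) / T := by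
    apply hTendR.eventually
    apply eventually_gt_nhds
    linarith
  filter_upwards [hev1, eventually_gt_atTop (0:ℝ)] with T hT1 hT0
  have hb := hbound T hT0
  have : (∫ τ in (0:ℝ)..T, φ τ) / T ≤ (volume {τ ∈ Set.Icc (0:ℝ) T |
      ∀ n < N, 1 - η ≤ (1 + Real.cos (lam n * τ)) / 2}).toReal / T + δ := by
    rw [div_add' _ _ _ hT0.ne']
    apply (div_le_div_iff_of_pos_right hT0).mpr
    linarith
  have hLκ : κ - (κ - δ) / 2 ≤ L - (κ - δ) / 2 := by linarith
  linarith

lemma norm_exp_I_sub_one_sq (θ : ℝ) :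
    ‖Complex.exp ((θ : ℂ) * Complex.I) - 1‖ ^ 2 = 2 - 2 * Real.cos θ := by
  rw [Complex.exp_mul_I]
  rw [Complex.sq_norm, Complex.normSq_apply]
  simp only [Complex.add_re, Complex.add_im, Complex.sub_re, Complex.sub_im,
    Complex.mul_re, Complex.mul_im, Complex.I_re, Complex.I_im, Complex.one_re,
    Complex.one_im, Complex.cos_ofReal_re, Complex.cos_ofReal_im,
    Complex.sin_ofReal_re, Complex.sin_ofReal_im]
  ring_nf
  nlinarith [Real.sin_sq_add_cos_sq θ]

lemma norm_exp_I_sub_one_le_two (θ : ℝ) :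
    ‖Complex.exp ((θ : ℂ) * Complex.I) - 1‖ ≤ 2 := by
  calc ‖Complex.exp ((θ : ℂ) * Complex.I) - 1‖
      ≤ ‖Complex.exp ((θ : ℂ) * Complex.I)‖ + ‖(1:ℂ)‖ := norm_sub_le _ _
    _ ≤ 2 := by
        rw [Complex.norm_exp]
        norm_num [Complex.mul_re]

lemma dirichlet_pointwise (a : ℕ → ℂ) (lam : ℕ → ℝ) (s₀ : ℂ) (ε η : ℝ) (N : ℕ)
    (hb : Summable (fun n => ‖a n‖ * Real.exp (-(lam n) * s₀.re)))
    (hN : ∑' k, ‖a (k + N)‖ * Real.exp (-(lam (k + N)) * s₀.re) < ε / 8)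
    (hε : 0 < ε)
    (hcirc : ∀ θ : ℝ, 1 - η ≤ (1 + Real.cos θ) / 2 →
      ‖Complex.exp ((θ : ℂ) * Complex.I) - 1‖ ≤
        ε / (4 * ((∑' n, ‖a n‖ * Real.exp (-(lam n) * s₀.re)) + 1)))
    (τ : ℝ) (hτ : ∀ n < N, 1 - η ≤ (1 + Real.cos (-(lam n) * τ)) / 2) :
    ‖
      ((∑' n, a n * Complex.exp (-(lam n : ℂ) * (s₀ + τ * Complex.I))) -
        ∑' n, a n * Complex.exp (-(lam n : ℂ) * s₀))‖ < ε := by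
  set b : ℕ → ℝ := fun n => ‖a n‖ * Real.exp (-(lam n) * s₀.re) with hbdef
  have hbnn : ∀ n, 0 ≤ b n := fun n => mul_nonneg (norm_nonneg _) (Real.exp_pos _).le
  set B : ℝ := ∑' n, b n with hB
  have hBnn : 0 ≤ B := tsum_nonneg hbnn
  set c : ℕ → ℂ := fun n => a n * Complex.exp (-(lam n : ℂ) * (s₀ + τ * Complex.I)) -
    a n * Complex.exp (-(lam n : ℂ) * s₀) with hcdef
  have hsplit : ∀ n : ℕ, Complex.exp (-(lam n : ℂ) * (s₀ + τ * Complex.I))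
      = Complex.exp (-(lam n : ℂ) * s₀) *
        Complex.exp (((-(lam n) * τ : ℝ) : ℂ) * Complex.I) := by
    intro n
    rw [← Complex.exp_add]
    congr 1
    push_cast
    ring
  have hnorm0 : ∀ n : ℕ, ‖a n * Complex.exp (-(lam n : ℂ) * s₀)‖ = b n := by
    intro n
    simp only [norm_mul, Complex.norm_exp]
    congr 2
    simp [Complex.mul_re]
  have hnorm : ∀ n : ℕ, ‖c n‖
      = b n * ‖Complex.exp (((-(lam n) * τ : ℝ) : ℂ) * Complex.I) - 1‖ := by
    intro n
    have : c n = a n * Complex.exp (-(lam n : ℂ) * s₀) *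
        (Complex.exp (((-(lam n) * τ : ℝ) : ℂ) * Complex.I) - 1) := by
      rw [hcdef]
      simp only [hsplit]
      ring
    rw [this, norm_mul, hnorm0]
  have hsum2 : Summable (fun n => a n * Complex.exp (-(lam n : ℂ) * s₀)) := by
    apply Summable.of_norm
    simpa only [hnorm0] using hb
  have hsum1 : Summable (fun n => a n * Complex.exp (-(lam n : ℂ) * (s₀ + τ * Complex.I))) := by
    apply Summable.of_norm
    have : ∀ n, ‖a n * Complex.exp (-(lam n : ℂ) * (s₀ + τ * Complex.I))‖ = b n := by
      intro n
      rw [hsplit n, ← mul_assoc, norm_mul, hnorm0]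
      simp only [Complex.norm_exp]
      simp [Complex.mul_re]
    simpa only [this] using hb
  have hsumc : Summable c := hsum1.sub hsum2
  have hsumnorm : Summable (fun n => ‖c n‖) := hsumc.norm
  rw [← hsum1.tsum_sub hsum2]
  show ‖∑' n, c n‖ < ε
  have hN' : ∑' k, b (k + N) < ε / 8 := hN
  clear_value b B c

  have hfirst : ∑ n ∈ Finset.range N, ‖c n‖ ≤ (ε / (4 * (B + 1))) * B := by
    calc ∑ n ∈ Finset.range N, ‖c n‖
        ≤ ∑ n ∈ Finset.range N, b n * (ε / (4 * (B + 1))) := by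
          apply Finset.sum_le_sum
          intro n hn
          rw [hnorm n]
          exact mul_le_mul_of_nonneg_left
            (hcirc _ (hτ n (Finset.mem_range.mp hn))) (hbnn n)
      _ = (ε / (4 * (B + 1))) * ∑ n ∈ Finset.range N, b n := by
          rw [← Finset.sum_mul, mul_comm]
      _ ≤ (ε / (4 * (B + 1))) * B := by
          apply mul_le_mul_of_nonneg_left _ (by positivity)
          rw [hB]
          exact Summable.sum_le_tsum (Finset.range N) (fun n _ => hbnn n) hb
  have hsecond : ∑' k, ‖c (k + N)‖ ≤ 2 * (ε / 8) := by
    have hs1 : Summable (fun k => ‖c (k + N)‖) := (summable_nat_add_iff N).mpr hsumnorm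
    have hs2 : Summable (fun k => 2 * b (k + N)) := ((summable_nat_add_iff N).mpr hb).mul_left 2
    have hs3 : ∀ k, ‖c (k + N)‖ ≤ 2 * b (k + N) := by
      intro k
      rw [hnorm]
      calc b (k + N) * ‖Complex.exp (((-(lam (k+N)) * τ : ℝ) : ℂ) * Complex.I) - 1‖
          ≤ b (k + N) * 2 :=
            mul_le_mul_of_nonneg_left (norm_exp_I_sub_one_le_two _) (hbnn _)
        _ = 2 * b (k + N) := mul_comm _ _
    calc ∑' k, ‖c (k + N)‖ ≤ ∑' k, 2 * b (k + N) := Summable.tsum_le_tsum hs3 hs1 hs2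
      _ = 2 * ∑' k, b (k + N) := tsum_mul_left
      _ ≤ 2 * (ε / 8) := by linarith [hN']
  calc ‖∑' n, c n‖ ≤ ∑' n, ‖c n‖ := norm_tsum_le_tsum_norm hsumnorm
    _ = ∑ n ∈ Finset.range N, ‖c n‖ + ∑' k, ‖c (k + N)‖ :=
        (Summable.sum_add_tsum_nat_add N hsumnorm).symm
    _ ≤ (ε / (4 * (B + 1))) * B + 2 * (ε / 8) := add_le_add hfirst hsecond
    _ < ε := by
        have : (ε / (4 * (B + 1))) * B ≤ ε / 4 := by
          rw [div_mul_eq_mul_div, div_le_div_iff₀ (by positivity) (by norm_num)]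
          nlinarith
        linarith


/-- Bohr's almost periodicity theorem for general Dirichlet series: if
`f(s) = ∑_n a_n e^{−λ_n s}` converges absolutely at `s₀`, then for every `ε > 0` the set of
`τ ∈ [0, T]` with `|f(s₀ + iτ) − f(s₀)| < ε` has positive lower density. -/
theorem bohr_almost_periodicity
    (a : ℕ → ℂ) (lam : ℕ → ℝ) (s₀ : ℂ)
    (habs : Summable (fun n => ‖a n‖ * Real.exp (-(lam n) * s₀.re))) :
    ∀ ε : ℝ, 0 < ε →
      0 < lowerDensity (fun τ =>
        ‖
          ((∑' n, a n * Complex.exp (-(lam n : ℂ) * (s₀ + τ * Complex.I))) -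
            ∑' n, a n * Complex.exp (-(lam n : ℂ) * s₀))‖ < ε) := by
  intro ε hε
  have hb : Summable (fun n => ‖a n‖ * Real.exp (-(lam n) * s₀.re)) := habs
  have hbnn : ∀ n, 0 ≤ ‖a n‖ * Real.exp (-(lam n) * s₀.re) :=
    fun n => mul_nonneg (norm_nonneg _) (Real.exp_pos _).le
  set B : ℝ := ∑' n, ‖a n‖ * Real.exp (-(lam n) * s₀.re) with hB
  have hBnn : 0 ≤ B := tsum_nonneg hbnn
  -- tail
  obtain ⟨N, hN⟩ : ∃ N : ℕ, ∑' k, ‖a (k + N)‖ * Real.exp (-(lam (k + N)) * s₀.re) < ε / 8 := by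
    have h1 : Tendsto (fun N : ℕ => ∑ n ∈ Finset.range N, ‖a n‖ * Real.exp (-(lam n) * s₀.re))
        atTop (nhds B) := hb.hasSum.tendsto_sum_nat
    have h2 := h1.eventually (eventually_gt_nhds (show B - ε/8 < B by linarith))
    obtain ⟨N, hN2⟩ := h2.exists
    have h3 := Summable.sum_add_tsum_nat_add N hb
    exact ⟨N, by rw [hB] at hN2; linarith⟩
  -- η
  set η : ℝ := min (1/2) ((ε / (4 * (B + 1)))^2 / 4) with hηdef
  have hη : 0 < η := lt_min (by norm_num) (by positivity)
  have hη1 : η < 1 := lt_of_le_of_lt (min_le_left _ _) (by norm_num)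
  have hcirc : ∀ θ : ℝ, 1 - η ≤ (1 + Real.cos θ) / 2 →
      ‖Complex.exp ((θ : ℂ) * Complex.I) - 1‖ ≤ ε / (4 * (B + 1)) := by
    intro θ hθ
    have h1 : ‖Complex.exp ((θ : ℂ) * Complex.I) - 1‖ ^ 2 ≤ (ε / (4 * (B + 1)))^2 := by
      rw [norm_exp_I_sub_one_sq]
      have h2 : η ≤ (ε / (4 * (B + 1)))^2 / 4 := min_le_right _ _
      nlinarith
    calc ‖Complex.exp ((θ : ℂ) * Complex.I) - 1‖
        = Real.sqrt (‖Complex.exp ((θ : ℂ) * Complex.I) - 1‖ ^ 2) :=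
          (Real.sqrt_sq (norm_nonneg _)).symm
      _ ≤ Real.sqrt ((ε / (4 * (B + 1)))^2) := Real.sqrt_le_sqrt h1
      _ = ε / (4 * (B + 1)) := Real.sqrt_sq (by positivity)
  -- density of good set
  obtain ⟨β, hβ, hev⟩ := kernel_density (fun n => -(lam n)) N hη hη1
  -- transfer to target set
  have hmain : ∀ τ : ℝ, (∀ n < N, 1 - η ≤ (1 + Real.cos (-(lam n) * τ)) / 2) →
      ‖
        ((∑' n, a n * Complex.exp (-(lam n : ℂ) * (s₀ + τ * Complex.I))) -
          ∑' n, a n * Complex.exp (-(lam n : ℂ) * s₀))‖ < ε :=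
    fun τ hτ => dirichlet_pointwise a lam s₀ ε η N hb hN hε hcirc τ hτ
  rw [lowerDensity]
  refine lt_of_lt_of_le hβ (Filter.le_liminf_of_le ?_ ?_)
  · apply isCoboundedUnder_ge_of_eventually_le (x := 1) atTop
    filter_upwards [eventually_ge_atTop (1:ℝ)] with T hT
    have h1 : (volume {τ ∈ Set.Icc (0:ℝ) T | ‖
        ((∑' n, a n * Complex.exp (-(lam n : ℂ) * (s₀ + τ * Complex.I))) -
          ∑' n, a n * Complex.exp (-(lam n : ℂ) * s₀))‖ < ε}).toReal ≤ T := by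
      have h2 : (volume {τ ∈ Set.Icc (0:ℝ) T | ‖
          ((∑' n, a n * Complex.exp (-(lam n : ℂ) * (s₀ + τ * Complex.I))) -
            ∑' n, a n * Complex.exp (-(lam n : ℂ) * s₀))‖ < ε}) ≤ ENNReal.ofReal T := by
        refine le_trans (measure_mono (Set.sep_subset _ _)) ?_
        rw [Real.volume_Icc, sub_zero]
      refine le_trans (ENNReal.toReal_mono ENNReal.ofReal_ne_top h2) ?_
      rw [ENNReal.toReal_ofReal (by linarith)]
    rw [div_le_one (by linarith)]
    exact h1
  · filter_upwards [hev, eventually_gt_atTop (0:ℝ)] with T hT hT0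
    refine le_trans hT ?_
    have hsub : {τ ∈ Set.Icc (0:ℝ) T |
          ∀ n < N, 1 - η ≤ (1 + Real.cos (-(lam n) * τ)) / 2}
        ⊆ {τ ∈ Set.Icc (0:ℝ) T | ‖
          ((∑' n, a n * Complex.exp (-(lam n : ℂ) * (s₀ + τ * Complex.I))) -
            ∑' n, a n * Complex.exp (-(lam n : ℂ) * s₀))‖ < ε} := by
      intro τ hτ
      exact ⟨hτ.1, hmain τ hτ.2⟩
    have hne : (volume {τ ∈ Set.Icc (0:ℝ) T | ‖
        ((∑' n, a n * Complex.exp (-(lam n : ℂ) * (s₀ + τ * Complex.I))) -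
          ∑' n, a n * Complex.exp (-(lam n : ℂ) * s₀))‖ < ε}) ≠ ⊤ := by
      refine ne_of_lt (lt_of_le_of_lt (measure_mono (Set.sep_subset _ _)) ?_)
      rw [Real.volume_Icc]
      exact ENNReal.ofReal_lt_top
    have := ENNReal.toReal_mono hne (measure_mono hsub)
    gcongr
end

section
/- The following are equivalent: (i) for every ε > 0, ζ(1/2 + it) = O(|t|^ε) as |t| → ∞ (the Lindelöf hypothesis for the Riemann zeta function); (ii) for every integer r ≥ 2 and every ε > 0, Z_r(1/2 + it) = O(|t|^ε) as |t| → ∞, where Z_r(s) := (1/r!) · Σ_Π (−1)^{r−|Π|} ( ∏_{B ∈ Π} (|B| − 1)! ) · ∏_{B ∈ Π} ζ(|B|·s), the sum running over all set partitions Π of {1, …, r}. -/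
open Complex Finset

/-- The analytic continuation `Z_r(s)` of the diagonal Euler–Zagier multiple
zeta-function `ζ_r(s,…,s)`, given by Hoffman's relation as an alternating sum over set
partitions of `{1,…,r}` of products of Riemann zeta values. -/
noncomputable def ezDiagonal (r : ℕ) (s : ℂ) : ℂ :=
  (1 / (Nat.factorial r : ℂ)) *
    ∑ P : Finpartition (Finset.univ : Finset (Fin r)),
      (-1 : ℂ) ^ (r - P.parts.card) *
        (∏ B ∈ P.parts, (Nat.factorial (B.card - 1) : ℂ)) *
        ∏ B ∈ P.parts, riemannZeta ((B.card : ℂ) * s)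


noncomputable def K3 : ℝ := ∑' n : ℕ, (1:ℝ) / (n:ℝ) ^ ((3:ℝ)/2)

lemma K3_nonneg : 0 ≤ K3 := tsum_nonneg fun n => by positivity

lemma norm_term_eq (s : ℂ) (hs : 0 < s.re) (n : ℕ) :
    ‖(1:ℂ) / (n:ℂ) ^ s‖ = (1:ℝ) / (n:ℝ) ^ s.re := by
  rcases Nat.eq_zero_or_pos n with rfl | hn
  · rw [Nat.cast_zero, Nat.cast_zero, Complex.zero_cpow (fun h => by simp [h] at hs),
      Real.zero_rpow (ne_of_gt hs)]
    simp
  · rw [show ((n:ℂ)) = ((n:ℝ):ℂ) by push_cast; ring, norm_div, norm_one,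
      Complex.norm_cpow_eq_rpow_re_of_pos (by exact_mod_cast hn)]

lemma zeta_bound_three_halves (s : ℂ) (hs : (3:ℝ)/2 ≤ s.re) : ‖riemannZeta s‖ ≤ K3 := by
  have h1 : (1:ℝ) < s.re := by linarith
  have hs0 : 0 < s.re := by linarith
  rw [zeta_eq_tsum_one_div_nat_cpow h1]
  have hsumnorm : Summable (fun n : ℕ => ‖(1:ℂ) / (n:ℂ) ^ s‖) := by
    apply Summable.congr (Real.summable_one_div_nat_rpow.mpr h1)
    intro n; exact (norm_term_eq s hs0 n).symm
  refine (norm_tsum_le_tsum_norm hsumnorm).trans ?_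
  apply Summable.tsum_le_tsum _ hsumnorm (Real.summable_one_div_nat_rpow.mpr (by norm_num))
  intro n
  rw [norm_term_eq s hs0 n]
  rcases Nat.eq_zero_or_pos n with rfl | hn
  · rw [Nat.cast_zero, Real.zero_rpow (ne_of_gt hs0), Real.zero_rpow (by norm_num)]
  · have h1n : (1:ℝ) ≤ (n:ℝ) := by exact_mod_cast hn
    apply one_div_le_one_div_of_le (by positivity)
    exact Real.rpow_le_rpow_of_exponent_le h1n hs

lemma hasDerivAt_cpow_neg (s : ℂ) (hs : s ≠ 0) {x : ℝ} (hx : 0 < x) :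
    HasDerivAt (fun y : ℝ => (y:ℂ) ^ (-s)) (-s * (x:ℂ) ^ (-s - 1)) x := by
  have h := hasDerivAt_ofReal_cpow_const' (ne_of_gt hx) (r := -s - 1)
    (by intro h; exact hs (by linear_combination -h))
  have h2 := h.const_mul (-s)
  rw [show -s - 1 + 1 = -s by ring] at h2
  have hfun : (fun y : ℝ => (y:ℂ) ^ (-s)) = fun y : ℝ => -s * ((y:ℂ) ^ (-s) / (-s)) := by
    funext y; field_simp
  rw [hfun]; exact h2

lemma norm_cpow_neg (s : ℂ) {x : ℝ} (hx : 0 < x) : ‖(x:ℂ) ^ (-s)‖ = x ^ (-s.re) := by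
  rw [Complex.norm_cpow_eq_rpow_re_of_pos hx, Complex.neg_re]

lemma diff_bound (s : ℂ) (hs : s ≠ 0) (hre : 0 ≤ s.re) (n : ℕ) (hn : 1 ≤ n) {x : ℝ}
    (hx : x ∈ Set.Icc (n:ℝ) ((n:ℝ)+1)) :
    ‖(x:ℂ) ^ (-s) - ((n:ℝ):ℂ) ^ (-s)‖ ≤ ‖s‖ * (n:ℝ) ^ (-s.re - 1) := by
  have hnpos : (0:ℝ) < n := by exact_mod_cast hn
  have := (convex_Icc (n:ℝ) ((n:ℝ)+1)).norm_image_sub_le_of_norm_hasDerivWithin_le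
    (f := fun y : ℝ => (y:ℂ) ^ (-s)) (f' := fun y : ℝ => -s * (y:ℂ) ^ (-s - 1))
    (C := ‖s‖ * (n:ℝ) ^ (-s.re - 1)) ?_ ?_ (Set.left_mem_Icc.mpr (by linarith)) hx
  · refine this.trans ?_
    have h1 : |x - (n:ℝ)| ≤ 1 := by
      rw [abs_le]; constructor <;> [linarith [hx.1]; linarith [hx.2]]
    calc ‖s‖ * (n:ℝ) ^ (-s.re - 1) * ‖x - (n:ℝ)‖
        ≤ ‖s‖ * (n:ℝ) ^ (-s.re - 1) * 1 := by
          apply mul_le_mul_of_nonneg_left _ (by positivity)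
          simpa using h1
      _ = ‖s‖ * (n:ℝ) ^ (-s.re - 1) := by ring
  · intro y hy
    exact (hasDerivAt_cpow_neg s hs (by linarith [hy.1])).hasDerivWithinAt
  · intro y hy
    rw [norm_mul, norm_neg, show ‖(y:ℂ) ^ (-s - 1)‖ = y ^ (-s.re - 1) by
      rw [Complex.norm_cpow_eq_rpow_re_of_pos (by linarith [hy.1])]
      norm_num]
    apply mul_le_mul_of_nonneg_left _ (norm_nonneg s)
    exact Real.rpow_le_rpow_of_nonpos hnpos hy.1 (by linarith)

lemma integrable_cpow_neg (s : ℂ) (hs : s ≠ 0) (n : ℕ) (hn : 1 ≤ n) :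
    IntervalIntegrable (fun x : ℝ => (x:ℂ) ^ (-s)) MeasureTheory.volume (n:ℝ) ((n:ℝ)+1) := by
  apply ContinuousOn.intervalIntegrable
  intro x hx
  rw [Set.uIcc_of_le (by linarith)] at hx
  have h1n : (1:ℝ) ≤ n := by exact_mod_cast hn
  have hxpos : (0:ℝ) < x := by have := hx.1; linarith
  exact (hasDerivAt_cpow_neg s hs hxpos).continuousAt.continuousWithinAt

lemma rn_bound (s : ℂ) (hs : s ≠ 0) (hre : 0 ≤ s.re) (n : ℕ) (hn : 1 ≤ n) :
    ‖((n:ℝ):ℂ) ^ (-s) - ∫ x in (n:ℝ)..((n:ℝ)+1), (x:ℂ) ^ (-s)‖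
      ≤ ‖s‖ * (n:ℝ) ^ (-s.re - 1) := by
  have hconst : ((n:ℝ):ℂ) ^ (-s) = ∫ _ in (n:ℝ)..((n:ℝ)+1), ((n:ℝ):ℂ) ^ (-s) := by
    rw [intervalIntegral.integral_const]; simp
  rw [hconst, ← intervalIntegral.integral_sub (by simp [_root_.intervalIntegrable_const]) (integrable_cpow_neg s hs n hn)]
  have := intervalIntegral.norm_integral_le_of_norm_le_const
    (a := (n:ℝ)) (b := (n:ℝ)+1) (C := ‖s‖ * (n:ℝ) ^ (-s.re - 1))
    (f := fun x : ℝ => ((n:ℝ):ℂ) ^ (-s) - (x:ℂ) ^ (-s)) ?_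
  · simpa using this
  · intro x hx
    rw [Set.uIoc_of_le (by linarith)] at hx
    rw [norm_sub_rev]
    exact diff_bound s hs hre n hn ⟨hx.1.le, hx.2⟩

lemma integral_value (s : ℂ) (hs1 : s ≠ 1) (n : ℕ) (hn : 1 ≤ n) :
    ∫ x in (n:ℝ)..((n:ℝ)+1), (x:ℂ) ^ (-s)
      = ((n:ℝ)+1:ℝ) ^ (1 - s) / (1 - s) - ((n:ℝ):ℂ) ^ (1 - s) / (1 - s) := by
  have hn' : (1:ℝ) ≤ n := by exact_mod_cast hn
  rw [integral_cpow (Or.inr ⟨by intro h; exact hs1 (by linear_combination -h),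
      by rw [Set.uIcc_of_le (by linarith)]; intro h; exact absurd h.1 (by linarith)⟩)]
  rw [show -s + 1 = 1 - s by ring]
  push_cast
  ring

lemma telescope_inv_sq (N M : ℕ) (hN : 1 ≤ N) :
    ∑ n ∈ Finset.Ico (N+1) M, (1:ℝ)/(n:ℝ)^2 ≤ 1/(N:ℝ) := by
  have hNpos : (0:ℝ) < N := by exact_mod_cast hN
  set u : ℕ → ℝ := fun m => 1/((m:ℝ)-1) with hu
  have key : ∀ n ∈ Finset.Ico (N+1) M, (1:ℝ)/(n:ℝ)^2 ≤ u n - u (n+1) := by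
    intro n hn
    rw [Finset.mem_Ico] at hn
    have h2n : 2 ≤ n := by omega
    have h2 : (2:ℝ) ≤ (n:ℝ) := by exact_mod_cast h2n
    have e1 : (0:ℝ) < (n:ℝ) - 1 := by linarith
    have e2 : (0:ℝ) < (n:ℝ) := by linarith
    have huu : u n - u (n+1) = 1/(((n:ℝ)-1)*(n:ℝ)) := by
      simp only [hu]
      rw [show ((n+1:ℕ):ℝ) = (n:ℝ)+1 by push_cast; ring]
      rw [show (n:ℝ)+1-1 = n by ring, div_sub_div _ _ (ne_of_gt e1) (ne_of_gt e2)]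
      congr 1; ring
    rw [huu]
    apply one_div_le_one_div_of_le (by positivity)
    nlinarith
  refine (Finset.sum_le_sum key).trans ?_
  rw [Finset.sum_Ico_eq_sum_range]
  have hshift : ∀ k : ℕ, u (N+1+k+1) = u (N+1+(k+1)) := fun k => rfl
  simp only [hshift]
  rw [Finset.sum_range_sub' (fun j => u (N+1+j)) (M-(N+1))]
  have h0 : u (N+1+0) = 1/(N:ℝ) := by
    simp only [hu]; norm_num
  rw [h0]
  have hb : 0 ≤ u (N+1+(M-(N+1))) := by
    simp only [hu]
    have : (1:ℝ) ≤ ((N+1+(M-(N+1)):ℕ):ℝ) - 1 := by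
      have : 2 ≤ N+1+(M-(N+1)) := by omega
      have := (Nat.cast_le (α := ℝ)).mpr this
      push_cast at this ⊢
      linarith
    positivity
  linarith

section
variable (s : ℂ)

lemma G_norm_le (h1 : 1 < s.re) (ht : 1 ≤ |s.im|) (m : ℕ) (hm : 1 ≤ m) :
    ‖((m:ℝ):ℂ) ^ (1-s) / (1-s)‖ ≤ 1 := by
  have hm' : (1:ℝ) ≤ (m:ℝ) := by exact_mod_cast hm
  rw [norm_div]
  have hnum : ‖((m:ℝ):ℂ) ^ (1-s)‖ ≤ 1 := by
    rw [Complex.norm_cpow_eq_rpow_re_of_pos (by linarith)]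
    exact Real.rpow_le_one_of_one_le_of_nonpos hm' (by simp [Complex.sub_re]; linarith)
  have hden : (1:ℝ) ≤ ‖1-s‖ := by
    calc (1:ℝ) ≤ |s.im| := ht
    _ = |(1-s).im| := by simp
    _ ≤ ‖1-s‖ := Complex.abs_im_le_norm _
    _ = ‖1-s‖ := rfl
  calc ‖((m:ℝ):ℂ) ^ (1-s)‖ / ‖1-s‖ ≤ 1 / 1 :=
    div_le_div₀ zero_le_one hnum one_pos hden
  _ = 1 := by norm_num
end

lemma tail_bound (s : ℂ) (h1 : 1 < s.re) (h2 : s.re ≤ 2) (ht : 1 ≤ |s.im|)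
    (N : ℕ) (hN : |s.im| ≤ N) (M : ℕ) :
    ‖∑ n ∈ Finset.Ico (N+1) M, ((n:ℝ):ℂ) ^ (-s)‖ ≤ 5 := by
  have hs0 : s ≠ 0 := fun h => by rw [h] at h1; simp at h1; linarith
  have hs1 : s ≠ 1 := fun h => by rw [h] at h1; simp at h1
  have hN1 : 1 ≤ N := by
    by_contra h
    push_neg at h
    interval_cases N <;> simp_all <;> linarith
  rcases le_or_gt M (N+1) with hM | hM
  · rw [Finset.Ico_eq_empty (by omega)]
    norm_num
  set G : ℕ → ℂ := fun m => ((m:ℝ):ℂ) ^ (1-s) / (1-s) with hG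
  have hsplit : ∀ n ∈ Finset.Ico (N+1) M, ((n:ℝ):ℂ) ^ (-s)
      = (G (n+1) - G n) + (((n:ℝ):ℂ) ^ (-s) - (G (n+1) - G n)) := by
    intro n _; ring
  rw [Finset.sum_congr rfl hsplit, Finset.sum_add_distrib]
  have tele : ∑ n ∈ Finset.Ico (N+1) M, (G (n+1) - G n) = G M - G (N+1) := by
    rw [Finset.sum_Ico_eq_sum_range]
    have hshift : ∀ k : ℕ, G (N+1+k+1) = G (N+1+(k+1)) := fun k => rfl
    simp only [hshift]
    rw [Finset.sum_range_sub (fun j => G (N+1+j))]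
    congr 2 <;> omega
  rw [tele]
  have hGb : ‖G M - G (N+1)‖ ≤ 2 := by
    refine (norm_sub_le _ _).trans ?_
    have g1 := G_norm_le s h1 ht M (by omega)
    have g2 := G_norm_le s h1 ht (N+1) (by omega)
    simp only [hG] at *
    linarith
  have hrb : ‖∑ n ∈ Finset.Ico (N+1) M, (((n:ℝ):ℂ) ^ (-s) - (G (n+1) - G n))‖ ≤ 3 := by
    refine (norm_sum_le _ _).trans ?_
    have hterm : ∀ n ∈ Finset.Ico (N+1) M,
        ‖((n:ℝ):ℂ) ^ (-s) - (G (n+1) - G n)‖ ≤ ‖s‖ * ((1:ℝ)/(n:ℝ)^2) := by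
      intro n hn
      rw [Finset.mem_Ico] at hn
      have hn1 : 1 ≤ n := by omega
      have hn1' : (1:ℝ) ≤ (n:ℝ) := by exact_mod_cast hn1
      have hint : G (n+1) - G n = ∫ x in (n:ℝ)..((n:ℝ)+1), (x:ℂ) ^ (-s) := by
        rw [integral_value s hs1 n hn1]
        simp only [hG]
        congr 2
        push_cast
        norm_num
      rw [hint]
      refine (rn_bound s hs0 (by linarith) n hn1).trans ?_
      apply mul_le_mul_of_nonneg_left _ (norm_nonneg s)
      calc (n:ℝ) ^ (-s.re - 1) ≤ (n:ℝ) ^ (-2:ℝ) :=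
        Real.rpow_le_rpow_of_exponent_le hn1' (by linarith)
      _ = 1/(n:ℝ)^2 := by
        rw [Real.rpow_neg (by linarith), show ((2:ℝ)) = ((2:ℕ):ℝ) by norm_num,
          Real.rpow_natCast, one_div]
    refine (Finset.sum_le_sum hterm).trans ?_
    rw [← Finset.mul_sum]
    have hsum2 := telescope_inv_sq N M hN1
    have hs_le : ‖s‖ ≤ 3 * |s.im| := by
      refine (Complex.norm_le_abs_re_add_abs_im s).trans ?_
      have : |s.re| ≤ 2 := abs_le.mpr ⟨by linarith, h2⟩
      linarith
    have hNpos : (0:ℝ) < N := by exact_mod_cast hN1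
    calc ‖s‖ * ∑ n ∈ Finset.Ico (N+1) M, (1:ℝ)/(n:ℝ)^2
        ≤ (3 * |s.im|) * (1/(N:ℝ)) := by
          apply mul_le_mul hs_le hsum2 (Finset.sum_nonneg fun n _ => by positivity) (by positivity)
      _ ≤ 3 := by
          rw [mul_one_div]
          rw [div_le_iff₀ hNpos]
          linarith
  calc ‖G M - G (N+1) + ∑ n ∈ Finset.Ico (N+1) M, (((n:ℝ):ℂ) ^ (-s) - (G (n+1) - G n))‖
      ≤ ‖G M - G (N+1)‖ + ‖∑ n ∈ Finset.Ico (N+1) M, (((n:ℝ):ℂ) ^ (-s) - (G (n+1) - G n))‖ :=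
        norm_add_le _ _
    _ ≤ 5 := by linarith

lemma head_bound (s : ℂ) (h1 : 1 < s.re) (N : ℕ) (hN : 1 ≤ N) :
    ‖∑ n ∈ Finset.range (N+1), (1:ℂ)/(n:ℂ)^s‖ ≤ 1 + Real.log N := by
  refine (norm_sum_le _ _).trans ?_
  have hterm : ∀ n ∈ Finset.range (N+1), ‖(1:ℂ)/(n:ℂ)^s‖
      = (1:ℝ)/(n:ℝ)^s.re := fun n _ => norm_term_eq s (by linarith) n
  rw [Finset.sum_congr rfl hterm, Finset.sum_range_succ']
  have h0 : (1:ℝ)/((0:ℕ):ℝ)^s.re = 0 := by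
    rw [Nat.cast_zero, Real.zero_rpow (by linarith)]; norm_num
  rw [h0, add_zero]
  have hle : ∀ i ∈ Finset.range N, (1:ℝ)/((i+1:ℕ):ℝ)^s.re ≤ 1/((i:ℝ)+1) := by
    intro i _
    have hi : (1:ℝ) ≤ ((i+1:ℕ):ℝ) := by exact_mod_cast Nat.one_le_iff_ne_zero.mpr (by omega)
    apply one_div_le_one_div_of_le (by positivity)
    calc (i:ℝ)+1 = ((i+1:ℕ):ℝ) ^ (1:ℝ) := by rw [Real.rpow_one]; push_cast; ring
    _ ≤ ((i+1:ℕ):ℝ) ^ s.re := Real.rpow_le_rpow_of_exponent_le hi (by linarith)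
  refine (Finset.sum_le_sum hle).trans ?_
  have : ∑ i ∈ Finset.range N, (1:ℝ)/((i:ℝ)+1) = ((harmonic N : ℚ) : ℝ) := by
    rw [harmonic]
    push_cast
    simp [one_div]
  rw [this]
  exact harmonic_le_one_add_log N

lemma zeta_strip_bound (s : ℂ) (h1 : 1 < s.re) (h2 : s.re ≤ 2) (ht : 1 ≤ |s.im|) :
    ‖riemannZeta s‖ ≤ 7 + Real.log |s.im| := by
  set t := s.im with htdef
  set N : ℕ := ⌈|t|⌉₊ with hNdef
  have htpos : (0:ℝ) < |t| := by linarith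
  have hN : |t| ≤ N := Nat.le_ceil _
  have hN1 : 1 ≤ N := by
    rw [hNdef]; exact_mod_cast Nat.one_le_ceil_iff.mpr htpos
  have hNle : (N:ℝ) ≤ 2*|t| := by
    have := Nat.ceil_lt_add_one (le_of_lt htpos)
    calc (N:ℝ) ≤ |t| + 1 := le_of_lt this
    _ ≤ 2*|t| := by linarith
  have hsum : Summable (fun n : ℕ => (1:ℂ)/(n:ℂ)^s) := by
    rw [Complex.summable_one_div_nat_cpow]; exact h1
  set head : ℂ := ∑ n ∈ Finset.range (N+1), (1:ℂ)/(n:ℂ)^s with hhead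
  have htail : ‖riemannZeta s - head‖ ≤ 5 := by
    have htend : Filter.Tendsto (fun M => ∑ n ∈ Finset.range M, (1:ℂ)/(n:ℂ)^s)
        Filter.atTop (nhds (riemannZeta s)) := by
      rw [zeta_eq_tsum_one_div_nat_cpow h1]
      exact hsum.hasSum.tendsto_sum_nat
    have htend2 : Filter.Tendsto
        (fun M => ‖(∑ n ∈ Finset.range M, (1:ℂ)/(n:ℂ)^s) - head‖)
        Filter.atTop (nhds ‖riemannZeta s - head‖) :=
      ((htend.sub tendsto_const_nhds).norm)
    refine le_of_tendsto htend2 ?_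
    filter_upwards [Filter.eventually_ge_atTop (N+1)] with M hM
    have hsub : (∑ n ∈ Finset.range M, (1:ℂ)/(n:ℂ)^s) - head
        = ∑ n ∈ Finset.Ico (N+1) M, ((n:ℝ):ℂ) ^ (-s) := by
      rw [hhead, eq_comm, Finset.sum_Ico_eq_sub _ hM]
      have hcg : ∀ (A : Finset ℕ), ∑ n ∈ A, ((n:ℝ):ℂ) ^ (-s) = ∑ n ∈ A, (1:ℂ)/(n:ℂ)^s := by
        intro A
        apply Finset.sum_congr rfl
        intro n _
        rw [Complex.cpow_neg, show ((n:ℝ):ℂ) = (n:ℂ) by push_cast; ring, one_div]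
      rw [hcg, hcg]
    rw [hsub]
    exact tail_bound s h1 h2 ht N hN M
  have hhead_le : ‖head‖ ≤ 2 + Real.log |t| := by
    refine (head_bound s h1 N hN1).trans ?_
    have hlog : Real.log N ≤ Real.log (2*|t|) :=
      Real.log_le_log (by exact_mod_cast hN1) hNle
    rw [Real.log_mul (by norm_num) (ne_of_gt htpos)] at hlog
    have := Real.log_le_sub_one_of_pos (show (0:ℝ) < 2 by norm_num)
    linarith
  calc ‖riemannZeta s‖ = ‖head + (riemannZeta s - head)‖ := by ring_nf
  _ ≤ ‖head‖ + ‖riemannZeta s - head‖ := norm_add_le _ _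
  _ ≤ 7 + Real.log |t| := by linarith

lemma zeta_one_line_bound (u : ℝ) (hu : 1 ≤ |u|) :
    ‖riemannZeta (1 + u * Complex.I)‖ ≤ 7 + Real.log |u| := by
  have hu0 : u ≠ 0 := fun h => by rw [h] at hu; norm_num at hu
  have hne : (1 : ℂ) + u * Complex.I ≠ 1 := by
    intro h
    have : (u : ℂ) * Complex.I = 0 := by linear_combination h
    simp [Complex.ext_iff] at this
    exact hu0 this
  have hcont : Filter.Tendsto (fun k : ℕ => riemannZeta ((1 + (1:ℝ)/(k+1) : ℝ) + u * Complex.I))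
      Filter.atTop (nhds (riemannZeta (1 + u * Complex.I))) := by
    apply ((differentiableAt_riemannZeta hne).continuousAt.tendsto).comp
    have : Filter.Tendsto (fun k : ℕ => ((1 + (1:ℝ)/(k+1) : ℝ) : ℂ)) Filter.atTop (nhds 1) := by
      rw [show (1:ℂ) = ((1:ℝ):ℂ) by norm_num]
      apply Filter.Tendsto.comp (Complex.continuous_ofReal.tendsto 1)
      have := tendsto_one_div_add_atTop_nhds_zero_nat (𝕜 := ℝ)
      have h2 : Filter.Tendsto (fun k : ℕ => 1 + (1:ℝ)/(k+1)) Filter.atTop (nhds (1+0)) :=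
        Filter.Tendsto.const_add 1 (by exact_mod_cast tendsto_one_div_add_atTop_nhds_zero_nat (𝕜 := ℝ))
      simpa using h2
    simpa using this.add_const (u * Complex.I)
  refine le_of_tendsto hcont.norm (Filter.Eventually.of_forall fun k => ?_)
  set sk : ℂ := (1 + (1:ℝ)/(k+1) : ℝ) + u * Complex.I with hsk
  have hre : sk.re = 1 + (1:ℝ)/(k+1) := by
    simp only [hsk, Complex.add_re, Complex.ofReal_re, Complex.mul_re, Complex.ofReal_im,
      Complex.I_re, Complex.I_im]
    ring
  have him : sk.im = u := by
    simp only [hsk, Complex.add_im, Complex.ofReal_im, Complex.mul_im, Complex.ofReal_re,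
      Complex.I_re, Complex.I_im]
    ring
  have hk0 : (0:ℝ) < 1/((k:ℝ)+1) := by positivity
  have hk1 : (1:ℝ)/((k:ℝ)+1) ≤ 1 := by
    rw [div_le_one (by positivity)]
    linarith [Nat.cast_nonneg (α := ℝ) k]
  have hb := zeta_strip_bound sk (by rw [hre]; linarith) (by rw [hre]; linarith)
    (by rw [him]; exact hu)
  rwa [him] at hb

lemma log_le_rpow {ε x : ℝ} (hε : 0 < ε) (hx : 1 ≤ x) : Real.log x ≤ x ^ ε / ε := by
  have hx0 : (0:ℝ) < x := by linarith
  have h1 : Real.log (x ^ ε) ≤ x ^ ε - 1 := Real.log_le_sub_one_of_pos (by positivity)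
  rw [Real.log_rpow hx0] at h1
  have h2 : (0:ℝ) < x ^ ε := by positivity
  rw [show Real.log x = (ε * Real.log x)/ε by field_simp]
  have h3 : ε * Real.log x ≤ x ^ ε := by linarith
  exact (div_le_div_iff_of_pos_right hε).mpr h3

def pA : Finpartition (Finset.univ : Finset (Fin 2)) :=
  ⟨{ {0,1} }, by decide, by decide, by decide⟩
def pB : Finpartition (Finset.univ : Finset (Fin 2)) :=
  ⟨{ {0}, {1} }, by decide, by decide, by decide⟩

lemma classify2 (q : Finset (Finset (Fin 2))) (h1 : q.sup id = Finset.univ)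
    (h2 : (⊥ : Finset (Fin 2)) ∉ q) (h3 : ∑ B ∈ q, B.card = 2) :
    q = { {0,1} } ∨ q = { {0}, {1} } := by revert h1 h2 h3; revert q; decide

lemma univ2 : (Finset.univ : Finset (Finpartition (Finset.univ : Finset (Fin 2)))) = {pA, pB} := by
  ext P
  simp only [mem_univ, true_iff, mem_insert, mem_singleton]
  have h3 : ∑ B ∈ P.parts, B.card = 2 := by simpa using P.sum_card_parts
  rcases classify2 P.parts P.sup_parts P.bot_notMem h3 with h | h
  · exact Or.inl (Finpartition.ext h)
  · exact Or.inr (Finpartition.ext h)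

def qA : Finpartition (Finset.univ : Finset (Fin 3)) :=
  ⟨{ {0,1,2} }, by decide, by decide, by decide⟩
def qB : Finpartition (Finset.univ : Finset (Fin 3)) :=
  ⟨{ {0}, {1,2} }, by decide, by decide, by decide⟩
def qC : Finpartition (Finset.univ : Finset (Fin 3)) :=
  ⟨{ {1}, {0,2} }, by decide, by decide, by decide⟩
def qD : Finpartition (Finset.univ : Finset (Fin 3)) :=
  ⟨{ {2}, {0,1} }, by decide, by decide, by decide⟩
def qE : Finpartition (Finset.univ : Finset (Fin 3)) :=
  ⟨{ {0}, {1}, {2} }, by decide, by decide, by decide⟩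

set_option maxHeartbeats 4000000 in
set_option maxRecDepth 100000 in
lemma classify3 (q : Finset (Finset (Fin 3))) (h1 : q.sup id = Finset.univ)
    (h2 : (⊥ : Finset (Fin 3)) ∉ q) (h3 : ∑ B ∈ q, B.card = 3) :
    q = { {0,1,2} } ∨ q = { {0}, {1,2} } ∨ q = { {1}, {0,2} } ∨ q = { {2}, {0,1} }
      ∨ q = { {0}, {1}, {2} } := by
  revert h1 h2 h3; revert q; decide

lemma univ3 : (Finset.univ : Finset (Finpartition (Finset.univ : Finset (Fin 3)))) =
    {qA, qB, qC, qD, qE} := by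
  ext P
  simp only [mem_univ, true_iff, mem_insert, mem_singleton]
  have h3 : ∑ B ∈ P.parts, B.card = 3 := by simpa using P.sum_card_parts
  rcases classify3 P.parts P.sup_parts P.bot_notMem h3 with h | h | h | h | h
  · exact Or.inl (Finpartition.ext h)
  · exact Or.inr <| Or.inl (Finpartition.ext h)
  · exact Or.inr <| Or.inr <| Or.inl (Finpartition.ext h)
  · exact Or.inr <| Or.inr <| Or.inr <| Or.inl (Finpartition.ext h)
  · exact Or.inr <| Or.inr <| Or.inr <| Or.inr (Finpartition.ext h)

lemma ez2_eval (s : ℂ) :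
    ezDiagonal 2 s = (riemannZeta s ^ 2 - riemannZeta (2 * s)) / 2 := by
  rw [ezDiagonal, univ2]
  rw [Finset.sum_insert (by decide), Finset.sum_singleton]
  have hA : pA.parts = { ({0,1} : Finset (Fin 2)) } := rfl
  have hB : pB.parts = { ({0} : Finset (Fin 2)), {1} } := rfl
  rw [hA, hB]
  rw [Finset.prod_singleton, Finset.prod_singleton,
    Finset.prod_insert (by decide), Finset.prod_insert (by decide),
    Finset.prod_singleton, Finset.prod_singleton]
  norm_num [show ({0,1} : Finset (Fin 2)).card = 2 from rfl,
    show ({0} : Finset (Fin 2)).card = 1 from rfl,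
    show ({1} : Finset (Fin 2)).card = 1 from rfl,
    show ({ ({0,1} : Finset (Fin 2)) } : Finset (Finset (Fin 2))).card = 1 from rfl,
    show ({ ({0} : Finset (Fin 2)), {1} } : Finset (Finset (Fin 2))).card = 2 from rfl,
    Nat.factorial]
  ring

lemma ez3_eval (s : ℂ) :
    ezDiagonal 3 s = (riemannZeta s ^ 3 - 3 * riemannZeta s * riemannZeta (2 * s)
      + 2 * riemannZeta (3 * s)) / 6 := by
  rw [ezDiagonal, univ3]
  rw [Finset.sum_insert (by decide), Finset.sum_insert (by decide),
    Finset.sum_insert (by decide), Finset.sum_insert (by decide), Finset.sum_singleton]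
  have hA : qA.parts = { ({0,1,2} : Finset (Fin 3)) } := rfl
  have hB : qB.parts = { ({0} : Finset (Fin 3)), {1,2} } := rfl
  have hC : qC.parts = { ({1} : Finset (Fin 3)), {0,2} } := rfl
  have hD : qD.parts = { ({2} : Finset (Fin 3)), {0,1} } := rfl
  have hE : qE.parts = { ({0} : Finset (Fin 3)), {1}, {2} } := rfl
  rw [hA, hB, hC, hD, hE]
  rw [Finset.prod_singleton,
    Finset.prod_insert (by decide), Finset.prod_singleton,
    Finset.prod_insert (by decide), Finset.prod_singleton,
    Finset.prod_insert (by decide), Finset.prod_singleton,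
    Finset.prod_insert (by decide), Finset.prod_insert (by decide), Finset.prod_singleton,
    Finset.prod_singleton,
    Finset.prod_insert (by decide), Finset.prod_singleton,
    Finset.prod_insert (by decide), Finset.prod_singleton,
    Finset.prod_insert (by decide), Finset.prod_singleton,
    Finset.prod_insert (by decide), Finset.prod_insert (by decide), Finset.prod_singleton]
  norm_num [show ({0,1,2} : Finset (Fin 3)).card = 3 from rfl,
    show ({0} : Finset (Fin 3)).card = 1 from rfl,
    show ({1} : Finset (Fin 3)).card = 1 from rfl,
    show ({2} : Finset (Fin 3)).card = 1 from rfl,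
    show ({1,2} : Finset (Fin 3)).card = 2 from rfl,
    show ({0,2} : Finset (Fin 3)).card = 2 from rfl,
    show ({0,1} : Finset (Fin 3)).card = 2 from rfl,
    show ({ ({0,1,2} : Finset (Fin 3)) } : Finset (Finset (Fin 3))).card = 1 from rfl,
    show ({ ({0} : Finset (Fin 3)), {1,2} } : Finset (Finset (Fin 3))).card = 2 from rfl,
    show ({ ({1} : Finset (Fin 3)), {0,2} } : Finset (Finset (Fin 3))).card = 2 from rfl,
    show ({ ({2} : Finset (Fin 3)), {0,1} } : Finset (Finset (Fin 3))).card = 2 from rfl,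
    show ({ ({0} : Finset (Fin 3)), {1}, {2} } : Finset (Finset (Fin 3))).card = 3 from rfl,
    Nat.factorial]
  ring

lemma re_k_mul (k : ℕ) (t : ℝ) : ((k:ℂ) * (1/2 + t * Complex.I)).re = k/2 := by
  simp [Complex.mul_re, Complex.add_re, Complex.add_im, Complex.mul_im]
  ring

lemma zeta_k_bound
    (H : ∀ ε : ℝ, 0 < ε → ∃ C : ℝ, 0 < C ∧ ∀ t : ℝ, 1 ≤ |t| →
      ‖riemannZeta (1 / 2 + t * Complex.I)‖ ≤ C * |t| ^ ε)
    {ε : ℝ} (hε : 0 < ε) :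
    ∃ C : ℝ, 1 ≤ C ∧ ∀ k : ℕ, 1 ≤ k → ∀ t : ℝ, 1 ≤ |t| →
      ‖riemannZeta ((k:ℂ) * (1/2 + t * Complex.I))‖ ≤ C * |t| ^ ε := by
  obtain ⟨C₁, hC₁, hH⟩ := H ε hε
  have hmax : (0:ℝ) ≤ max K3 0 := le_max_right _ _
  have hεinv : (0:ℝ) < 1/ε := one_div_pos.mpr hε
  refine ⟨C₁ + (8 + 1/ε) + max K3 0 + 1, by linarith, ?_⟩
  intro k hk t ht
  have htpow : (1:ℝ) ≤ |t| ^ ε := Real.one_le_rpow ht (le_of_lt hε)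
  have hp0 : (0:ℝ) ≤ |t| ^ ε := by linarith
  match k, hk with
  | 1, _ =>
    have harg : ((1:ℕ):ℂ) * (1/2 + t * Complex.I) = 1/2 + t * Complex.I := by push_cast; ring
    rw [harg]
    refine (hH t ht).trans ?_
    apply mul_le_mul_of_nonneg_right _ hp0
    linarith
  | 2, _ =>
    have h2t : 1 ≤ |2*t| := by
      rw [abs_mul, show |(2:ℝ)| = 2 by norm_num]; linarith
    have harg : ((2:ℕ):ℂ) * (1/2 + t * Complex.I) = 1 + ((2*t : ℝ):ℂ) * Complex.I := by
      push_cast; ring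
    rw [harg]
    refine (zeta_one_line_bound (2*t) h2t).trans ?_
    have ht0 : |t| ≠ 0 := by intro h; rw [h] at ht; norm_num at ht
    have l1 : Real.log |2*t| ≤ 1 + Real.log |t| := by
      rw [abs_mul, show |(2:ℝ)| = 2 by norm_num,
        Real.log_mul (by norm_num) ht0]
      have := Real.log_le_sub_one_of_pos (show (0:ℝ) < 2 by norm_num)
      linarith
    have l2 : Real.log |t| ≤ |t|^ε/ε := log_le_rpow hε ht
    have l3 : |t|^ε/ε = (1/ε) * |t|^ε := by ring
    have step : 7 + Real.log |2*t| ≤ 8 + (1/ε) * |t|^ε := by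
      rw [← l3]; linarith
    refine step.trans ?_
    nlinarith [mul_nonneg hC₁.le hp0, mul_nonneg hmax hp0]
  | (m+3), _ =>
    have hre : (((m+3:ℕ):ℂ) * (1/2 + t * Complex.I)).re = ((m+3:ℕ):ℝ)/2 := re_k_mul _ t
    have hb := zeta_bound_three_halves (((m+3:ℕ):ℂ) * (1/2 + t * Complex.I))
      (by rw [hre]; push_cast; nlinarith [Nat.cast_nonneg (α := ℝ) m])
    refine hb.trans ?_
    have hK : K3 ≤ max K3 0 := le_max_left _ _
    nlinarith [mul_nonneg hC₁.le hp0]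

lemma forward_dir
    (H : ∀ ε : ℝ, 0 < ε → ∃ C : ℝ, 0 < C ∧ ∀ t : ℝ, 1 ≤ |t| →
        ‖riemannZeta (1 / 2 + t * Complex.I)‖ ≤ C * |t| ^ ε) :
    ∀ r : ℕ, 2 ≤ r → ∀ ε : ℝ, 0 < ε → ∃ C : ℝ, 0 < C ∧ ∀ t : ℝ, 1 ≤ |t| →
        ‖ezDiagonal r (1 / 2 + t * Complex.I)‖ ≤ C * |t| ^ ε := by
  intro r hr ε hε
  have hr0 : (0:ℝ) < r := by exact_mod_cast (by omega : 0 < r)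
  have hε' : 0 < ε / r := by positivity
  obtain ⟨C, hC1, hC⟩ := zeta_k_bound H hε'
  set S : ℝ := ∑ P : Finpartition (Finset.univ : Finset (Fin r)),
      ∏ B ∈ P.parts, ((B.card - 1).factorial : ℝ) with hS
  have hS0 : 0 ≤ S :=
    Finset.sum_nonneg fun P _ => Finset.prod_nonneg fun B _ => by positivity
  have hC0 : (0:ℝ) < C := by linarith
  refine ⟨(1/(r.factorial:ℝ)) * S * C^r + 1, by positivity, ?_⟩
  intro t ht
  have hX1 : (1:ℝ) ≤ |t| ^ (ε/r) := Real.one_le_rpow ht (le_of_lt hε')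
  have hCX : (1:ℝ) ≤ C * (|t| ^ (ε/r)) := by nlinarith
  have hXr : (|t| ^ (ε/r))^r = |t| ^ ε := by
    rw [← Real.rpow_natCast (|t| ^ (ε/r)) r, ← Real.rpow_mul (abs_nonneg t)]
    congr 1
    field_simp
  have hprod : ∀ P : Finpartition (Finset.univ : Finset (Fin r)),
      ∏ B ∈ P.parts, ‖riemannZeta ((B.card : ℂ) * (1/2 + t * Complex.I))‖
        ≤ C^r * |t| ^ ε := by
    intro P
    have hcards : #P.parts ≤ r := by
      refine P.card_parts_le_card.trans ?_
      simp
    calc ∏ B ∈ P.parts, ‖riemannZeta ((B.card : ℂ) * (1/2 + t * Complex.I))‖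
        ≤ ∏ _B ∈ P.parts, (C * (|t| ^ (ε/r))) := by
          refine Finset.prod_le_prod (fun B _ => norm_nonneg _) (fun B hB => ?_)
          exact hC B.card (Finset.card_pos.mpr (P.nonempty_of_mem_parts hB)) t ht
      _ = (C * (|t| ^ (ε/r))) ^ (#P.parts) := by rw [Finset.prod_const]
      _ ≤ (C * (|t| ^ (ε/r))) ^ r := pow_le_pow_right₀ hCX hcards
      _ = C^r * (|t| ^ (ε/r))^r := mul_pow _ _ _
      _ = C^r * |t| ^ ε := by rw [hXr]
  have hterm : ∀ P : Finpartition (Finset.univ : Finset (Fin r)),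
      ‖(-1 : ℂ) ^ (r - #P.parts) *
        (∏ B ∈ P.parts, ((B.card - 1).factorial : ℂ)) *
        ∏ B ∈ P.parts, riemannZeta ((B.card : ℂ) * (1/2 + t * Complex.I))‖
      ≤ (∏ B ∈ P.parts, ((B.card - 1).factorial : ℝ)) * (C^r * |t| ^ ε) := by
    intro P
    rw [norm_mul, norm_mul, norm_pow, norm_neg, norm_one, one_pow, one_mul,
      norm_prod, norm_prod]
    have h1 : ∏ B ∈ P.parts, ‖((B.card - 1).factorial : ℂ)‖
        = ∏ B ∈ P.parts, ((B.card - 1).factorial : ℝ) := by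
      refine Finset.prod_congr rfl fun B _ => ?_
      rw [Complex.norm_natCast]
    rw [h1]
    exact mul_le_mul_of_nonneg_left (hprod P)
      (Finset.prod_nonneg fun B _ => by positivity)
  rw [ezDiagonal, norm_mul, norm_div, norm_one, Complex.norm_natCast]
  calc 1/(r.factorial:ℝ) *
      ‖∑ P : Finpartition (Finset.univ : Finset (Fin r)),
        (-1 : ℂ) ^ (r - #P.parts) *
        (∏ B ∈ P.parts, ((B.card - 1).factorial : ℂ)) *
        ∏ B ∈ P.parts, riemannZeta ((B.card : ℂ) * (1/2 + t * Complex.I))‖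
      ≤ 1/(r.factorial:ℝ) * ∑ P : Finpartition (Finset.univ : Finset (Fin r)),
          (∏ B ∈ P.parts, ((B.card - 1).factorial : ℝ)) * (C^r * |t| ^ ε) := by
        refine mul_le_mul_of_nonneg_left ?_ (by positivity)
        exact (norm_sum_le _ _).trans (Finset.sum_le_sum fun P _ => hterm P)
    _ = (1/(r.factorial:ℝ)) * S * C^r * |t| ^ ε := by
        rw [← Finset.sum_mul, hS]
        ring
    _ ≤ ((1/(r.factorial:ℝ)) * S * C^r + 1) * |t| ^ ε := by
        have : (0:ℝ) ≤ |t| ^ ε := Real.rpow_nonneg (abs_nonneg t) ε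
        nlinarith

lemma backward_dir
    (H : ∀ r : ℕ, 2 ≤ r → ∀ ε : ℝ, 0 < ε → ∃ C : ℝ, 0 < C ∧ ∀ t : ℝ, 1 ≤ |t| →
        ‖ezDiagonal r (1 / 2 + t * Complex.I)‖ ≤ C * |t| ^ ε) :
    ∀ ε : ℝ, 0 < ε → ∃ C : ℝ, 0 < C ∧ ∀ t : ℝ, 1 ≤ |t| →
        ‖riemannZeta (1 / 2 + t * Complex.I)‖ ≤ C * |t| ^ ε := by
  intro ε hε
  obtain ⟨C₂, hC₂, h₂⟩ := H 2 (by norm_num) ε hε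
  obtain ⟨C₃, hC₃, h₃⟩ := H 3 (by norm_num) ε hε
  set K : ℝ := 3*C₂ + 3*C₃ + max K3 0 with hK
  have hmax : (0:ℝ) ≤ max K3 0 := le_max_right _ _
  have hK0 : 0 < K := by positivity
  refine ⟨Real.sqrt K + 1, by positivity, ?_⟩
  intro t ht
  set s : ℂ := 1/2 + t * Complex.I with hs
  set a : ℂ := riemannZeta s with ha
  have htpow : (1:ℝ) ≤ |t| ^ ε := Real.one_le_rpow ht (le_of_lt hε)
  have hp0 : (0:ℝ) ≤ |t| ^ ε := by linarith
  have hc : ‖riemannZeta (3 * s)‖ ≤ max K3 0 := by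
    refine (zeta_bound_three_halves _ ?_).trans (le_max_left _ _)
    have h3re := re_k_mul 3 t
    push_cast at h3re
    rw [hs, h3re]
  have hid : a^3 = 3 * a * ezDiagonal 2 s - 3 * ezDiagonal 3 s + riemannZeta (3 * s) := by
    have e2 := ez2_eval s
    have e3 := ez3_eval s
    rw [ha]
    linear_combination (-3 * riemannZeta s) * e2 + 3 * e3
  set A : ℝ := ‖a‖ with hA
  have hA0 : 0 ≤ A := norm_nonneg a
  have hcube : A^3 ≤ 3*A*(C₂ * |t|^ε) + 3*(C₃ * |t|^ε) + max K3 0 := by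
    have hA3 : A^3 = ‖a^3‖ := by rw [hA, ← norm_pow]
    rw [hA3, hid]
    have step1 : ‖3 * a * ezDiagonal 2 s - 3 * ezDiagonal 3 s + riemannZeta (3 * s)‖
        ≤ ‖3 * a * ezDiagonal 2 s‖ + ‖3 * ezDiagonal 3 s‖ + ‖riemannZeta (3 * s)‖ := by
      refine (norm_add_le _ _).trans ?_
      have hsub := norm_sub_le (3 * a * ezDiagonal 2 s) (3 * ezDiagonal 3 s)
      linarith
    refine step1.trans ?_
    rw [norm_mul, norm_mul, norm_mul]
    simp only [Complex.norm_ofNat]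
    have b2 := h₂ t ht
    have b3 := h₃ t ht
    rw [← hs] at b2 b3
    have m2 : A * ‖ezDiagonal 2 s‖ ≤ A * (C₂ * |t|^ε) :=
      mul_le_mul_of_nonneg_left b2 hA0
    rw [← hA]
    linarith [hc, b3, m2]
  rcases le_or_gt A 1 with hA1 | hA1
  · calc A ≤ 1 := hA1
    _ ≤ (Real.sqrt K + 1) * |t|^ε := by
        nlinarith [Real.sqrt_nonneg K, mul_nonneg (Real.sqrt_nonneg K) hp0]
  · have hApos : (0:ℝ) < A := by linarith
    have hpA : (1:ℝ) ≤ |t|^ε * A := by nlinarith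
    have hA3' : A^2 * A ≤ (K * |t|^ε) * A := by
      calc A^2 * A = A^3 := by ring
      _ ≤ 3*A*(C₂ * |t|^ε) + 3*(C₃ * |t|^ε) + max K3 0 := hcube
      _ ≤ (K * |t|^ε) * A := by
          rw [hK]
          nlinarith [mul_nonneg (mul_nonneg hC₃.le hp0) (by linarith : (0:ℝ) ≤ A - 1),
            mul_nonneg hmax (by linarith : (0:ℝ) ≤ |t|^ε * A - 1)]
    have hsq : A^2 ≤ K * |t|^ε := le_of_mul_le_mul_right hA3' hApos
    have hAle : A ≤ Real.sqrt (K * |t|^ε) := by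
      rw [show A = Real.sqrt (A^2) from (Real.sqrt_sq hA0).symm]
      exact Real.sqrt_le_sqrt hsq
    refine hAle.trans ?_
    rw [Real.sqrt_mul hK0.le]
    have h1 : Real.sqrt (|t|^ε) ≤ |t|^ε := by
      calc Real.sqrt (|t|^ε) ≤ Real.sqrt ((|t|^ε)^2) := Real.sqrt_le_sqrt (by nlinarith)
      _ = |t|^ε := Real.sqrt_sq hp0
    nlinarith [Real.sqrt_nonneg K, Real.sqrt_nonneg (|t|^ε)]

/-- Proposition 3.9: the Lindelöf hypothesis for the Riemann zeta function is equivalent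
to the Lindelöf hypothesis `Z_r(1/2 + it) = O(|t|^ε)` for the diagonal Euler–Zagier
multiple zeta-functions `Z_r(s) = ζ_r(s,…,s)` for all `r ≥ 2`. -/
theorem lindelof_iff_lindelof_euler_zagier_diagonal :
    (∀ ε : ℝ, 0 < ε → ∃ C : ℝ, 0 < C ∧ ∀ t : ℝ, 1 ≤ |t| →
        ‖riemannZeta (1 / 2 + t * Complex.I)‖ ≤ C * |t| ^ ε) ↔
    (∀ r : ℕ, 2 ≤ r → ∀ ε : ℝ, 0 < ε → ∃ C : ℝ, 0 < C ∧ ∀ t : ℝ, 1 ≤ |t| →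
        ‖ezDiagonal r (1 / 2 + t * Complex.I)‖ ≤ C * |t| ^ ε) :=
  ⟨forward_dir, backward_dir⟩
end

section
/- Let r ≥ 2 and let s₁, …, s_r ∈ ℂ with Re s_j > 1 for every j. Then Σ_{σ ∈ S_r} ζ_r(s_{σ(1)}, …, s_{σ(r)}) = Σ_Π (−1)^{r−|Π|} ( ∏_{B ∈ Π} (|B| − 1)! ) · ∏_{B ∈ Π} ζ( Σ_{k ∈ B} s_k ), where S_r is the symmetric group on {1, …, r}, the right-hand sum runs over all set partitions Π of {1, …, r}, |Π| is the number of blocks of Π, |B| the cardinality of a block B, and ζ is the Riemann zeta function. -/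
open Complex Finset

/-- The Euler–Zagier multiple zeta-function
`ζ_r(s₁,…,s_r) = ∑_{n₁ > n₂ > ⋯ > n_r ≥ 1} n₁^{−s₁} ⋯ n_r^{−s_r}`,
as a sum over strictly decreasing tuples of positive integers. -/
noncomputable def eulerZagierZeta (r : ℕ) (s : Fin r → ℂ) : ℂ :=
  ∑' n : {n : Fin r → ℕ // StrictAnti n ∧ ∀ i, 1 ≤ n i},
    ∏ i, ((n.1 i : ℂ)) ^ (-(s i))


section Analysis

private lemma summable_norm_nat_cpow {t : ℂ} (ht : 1 < t.re) :
    Summable fun n : ℕ => ‖(n : ℂ) ^ (-t)‖ := by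
  have h0 : Summable fun n : ℕ => 1 / (n : ℝ) ^ t.re :=
    Real.summable_one_div_nat_rpow.mpr ht
  refine Summable.of_nonneg_of_le (fun n => norm_nonneg _) (fun n => ?_) h0
  rcases Nat.eq_zero_or_pos n with rfl | hn
  · rw [Nat.cast_zero, Complex.zero_cpow (neg_ne_zero.mpr (Complex.ne_zero_of_one_lt_re ht)),
      norm_zero]
    positivity
  · have hrw : ‖(n : ℂ) ^ (-t)‖ = (n : ℝ) ^ (-t.re) := by
      rw [show ((n : ℕ) : ℂ) = (((n : ℕ) : ℝ) : ℂ) by push_cast; ring,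
        Complex.norm_cpow_eq_rpow_re_of_pos (by exact_mod_cast hn), Complex.neg_re]
    rw [hrw, Real.rpow_neg (by positivity), one_div]

private lemma tsum_nat_cpow {t : ℂ} (ht : 1 < t.re) :
    (∑' n : ℕ, (n : ℂ) ^ (-t)) = riemannZeta t := by
  rw [zeta_eq_tsum_one_div_nat_cpow ht]
  exact tsum_congr fun n => by rw [Complex.cpow_neg, one_div]

private lemma cpow_finsetSum {x : ℂ} (hx : x ≠ 0) {ι : Type*} (B : Finset ι) (t : ι → ℂ) :
    x ^ (∑ i ∈ B, t i) = ∏ i ∈ B, x ^ t i := by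
  classical
  induction B using Finset.cons_induction with
  | empty => simp
  | cons a B ha ih => rw [Finset.sum_cons, Finset.prod_cons, Complex.cpow_add _ _ hx, ih]

private lemma natCast_cpow_neg_sum {ι : Type*} {B : Finset ι} (hB : B.Nonempty) {t : ι → ℂ}
    (ht : ∀ i ∈ B, 1 < (t i).re) (x : ℕ) :
    (∏ i ∈ B, (x : ℂ) ^ (-(t i))) = (x : ℂ) ^ (-∑ i ∈ B, t i) := by
  rcases Nat.eq_zero_or_pos x with rfl | hx
  · have hre : 0 < (∑ i ∈ B, t i).re := by
      rw [Complex.re_sum]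
      exact Finset.sum_pos (fun i hi => lt_trans one_pos (ht i hi)) hB
    have hsum : (∑ i ∈ B, t i) ≠ 0 := fun h => by simp [h] at hre
    obtain ⟨a, ha⟩ := hB
    rw [Nat.cast_zero, Complex.zero_cpow (neg_ne_zero.mpr hsum)]
    exact Finset.prod_eq_zero ha
      (by rw [Complex.zero_cpow (neg_ne_zero.mpr (Complex.ne_zero_of_one_lt_re (ht a ha)))])
  · have hx' : (x : ℂ) ≠ 0 := Nat.cast_ne_zero.mpr hx.ne'
    rw [← Finset.sum_neg_distrib, cpow_finsetSum hx']

private lemma pi_hasSum_fin : ∀ (k : ℕ) (f : Fin k → ℕ → ℂ),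
    (∀ i, Summable fun n => ‖f i n‖) →
    (Summable fun m : Fin k → ℕ => ‖∏ i, f i (m i)‖) ∧
      (∑' m : Fin k → ℕ, ∏ i, f i (m i)) = ∏ i, ∑' n, f i n := by
  intro k
  induction k with
  | zero =>
    intro f _
    constructor
    · exact (hasSum_fintype _).summable
    · rw [tsum_fintype]
      simp
  | succ k ih =>
    intro f hf
    obtain ⟨ihs, iht⟩ := ih (fun i => f i.succ) (fun i => hf i.succ)
    have hg : Summable (fun p : ℕ × (Fin k → ℕ) =>
        ‖f 0 p.1 * ∏ i : Fin k, f i.succ (p.2 i)‖) := by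
      have h := Summable.mul_norm (hf 0) ihs
      exact h
    have key : ∀ p : ℕ × (Fin k → ℕ),
        (∏ i, f i (Fin.consEquiv (fun _ => ℕ) p i)) = f 0 p.1 * ∏ i : Fin k, f i.succ (p.2 i) := by
      rintro ⟨n, m⟩
      have h : ∀ i, (Fin.consEquiv (fun _ => ℕ)) (n, m) i = Fin.cons (α := fun _ => ℕ) n m i :=
        fun _ => rfl
      simp_rw [h]
      rw [Fin.prod_univ_succ, Fin.cons_zero]
      simp [Fin.cons_succ]
    constructor
    · rw [← (Fin.consEquiv (fun _ => ℕ)).summable_iff]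
      refine hg.congr fun p => ?_
      simp only [Function.comp_apply]
      rw [key p]
    · rw [← (Fin.consEquiv (fun _ => ℕ)).tsum_eq]
      calc (∑' p : ℕ × (Fin k → ℕ), ∏ i, f i (Fin.consEquiv (fun _ => ℕ) p i))
          = ∑' p : ℕ × (Fin k → ℕ), f 0 p.1 * ∏ i : Fin k, f i.succ (p.2 i) := tsum_congr key
        _ = (∑' n, f 0 n) * (∑' m : Fin k → ℕ, ∏ i : Fin k, f i.succ (m i)) :=
            (tsum_mul_tsum_of_summable_norm (hf 0) ihs).symm
        _ = ∏ i, ∑' n, f i n := by rw [iht]; exact (Fin.prod_univ_succ fun i => ∑' n, f i n).symm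

private lemma pi_hasSum {ι : Type*} [Fintype ι] (f : ι → ℕ → ℂ)
    (hf : ∀ i, Summable fun n => ‖f i n‖) :
    (Summable fun m : ι → ℕ => ‖∏ i, f i (m i)‖) ∧
      (∑' m : ι → ℕ, ∏ i, f i (m i)) = ∏ i, ∑' n, f i n := by
  classical
  set k := Fintype.card ι with hk
  set e : ι ≃ Fin k := Fintype.equivFin ι with he
  obtain ⟨hS, hT⟩ := pi_hasSum_fin k (fun j => f (e.symm j)) (fun j => hf _)
  set E : (ι → ℕ) ≃ (Fin k → ℕ) := Equiv.arrowCongr e (Equiv.refl ℕ) with hE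
  have key : ∀ v : Fin k → ℕ, (∏ i, f i (E.symm v i)) = ∏ j, f (e.symm j) (v j) := by
    intro v
    have h1 : ∀ i, E.symm v i = v (e i) := fun i => rfl
    simp_rw [h1]
    rw [← Equiv.prod_comp e (fun j => f (e.symm j) (v j))]
    exact Finset.prod_congr rfl fun i _ => by rw [e.symm_apply_apply]
  constructor
  · rw [← E.symm.summable_iff]
    refine hS.congr fun v => ?_
    simp only [Function.comp_apply, key v]
  · rw [← E.symm.tsum_eq]
    calc (∑' v : Fin k → ℕ, ∏ i, f i (E.symm v i))
        = ∑' v : Fin k → ℕ, ∏ j, f (e.symm j) (v j) := tsum_congr key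
      _ = ∏ j, ∑' n, f (e.symm j) n := hT
      _ = ∏ i, ∑' n, f i n := Equiv.prod_comp e.symm (fun i => ∑' n, f i n)

end Analysis

private def aW : ℕ → ℂ := fun n => (-1) ^ (n - 1) * (Nat.factorial (n - 1) : ℂ)

section Combinatorics

variable {α β : Type*} [DecidableEq α] [DecidableEq β]

private def erasePart {s : Finset α} (P : Finpartition s) (C : Finset α) (hC : C ∈ P.parts) :
    Finpartition (s \ C) where
  parts := P.parts.erase C
  supIndep := P.supIndep.subset (erase_subset _ _)
  sup_parts := by
    have hdisj : Disjoint C ((P.parts.erase C).sup id) :=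
      P.supIndep (erase_subset _ _) hC (notMem_erase _ _)
    ext a
    rw [Finset.mem_sup, mem_sdiff]
    constructor
    · rintro ⟨B, hB, haB⟩
      refine ⟨(P.le (mem_of_mem_erase hB)) haB, fun haC => ?_⟩
      exact Finset.disjoint_left.mp hdisj haC (Finset.mem_sup.mpr ⟨B, hB, haB⟩)
    · rintro ⟨has, haC⟩
      obtain ⟨B, hB, haB⟩ := P.exists_mem has
      have hBC : B ≠ C := fun h => haC (h ▸ haB)
      exact ⟨B, mem_erase.mpr ⟨hBC, hB⟩, haB⟩
  bot_notMem := fun h => P.bot_notMem (mem_of_mem_erase h)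

private lemma erasePart_parts {s : Finset α} (P : Finpartition s) (C : Finset α)
    (hC : C ∈ P.parts) : (erasePart P C hC).parts = P.parts.erase C := rfl

private lemma finpart_rec (φ : Finset α → ℂ) {s : Finset α} {x : α} (hx : x ∈ s) :
    (∑ P : Finpartition s, ∏ B ∈ P.parts, φ B)
      = ∑ C ∈ s.powerset.filter (fun C => x ∈ C),
          φ C * ∑ P : Finpartition (s \ C), ∏ B ∈ P.parts, φ B := by
  classical
  have hmap : ∀ P ∈ (univ : Finset (Finpartition s)),
      P.part x ∈ s.powerset.filter (fun C => x ∈ C) := by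
    intro P _
    rw [mem_filter, mem_powerset]
    exact ⟨P.le (P.part_mem.mpr hx), P.mem_part hx⟩
  rw [← Finset.sum_fiberwise_of_maps_to hmap (fun P : Finpartition s => ∏ B ∈ P.parts, φ B)]
  refine Finset.sum_congr rfl fun C hC => ?_
  rw [mem_filter, mem_powerset] at hC
  obtain ⟨hCs, hxC⟩ := hC
  have hCne : C ≠ ⊥ := by
    rw [Finset.bot_eq_empty]
    exact Finset.ne_empty_of_mem hxC
  have hsup : (s \ C) ⊔ C = s := by
    rw [Finset.sup_eq_union, Finset.sdiff_union_of_subset hCs]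
  rw [Finset.mul_sum]
  refine Finset.sum_bij'
    (fun P hP => erasePart P C (by
      rw [mem_filter] at hP
      exact hP.2 ▸ P.part_mem.mpr hx))
    (fun P' _ => P'.extend hCne Finset.sdiff_disjoint hsup) ?_ ?_ ?_ ?_ ?_
  · intro P hP
    exact mem_univ _
  · intro P' _
    rw [mem_filter]
    refine ⟨mem_univ _, ?_⟩
    exact (P'.extend hCne Finset.sdiff_disjoint hsup).part_eq_of_mem
      (by rw [Finpartition.extend_parts]; exact mem_insert_self _ _) hxC
  · intro P hP
    rw [mem_filter] at hP
    apply Finpartition.ext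
    rw [Finpartition.extend_parts, erasePart_parts, insert_erase (hP.2 ▸ P.part_mem.mpr hx)]
  · intro P' _
    have hCP' : C ∉ P'.parts := fun h => by
      have := (P'.le h) hxC
      rw [mem_sdiff] at this
      exact this.2 hxC
    apply Finpartition.ext
    rw [erasePart_parts, Finpartition.extend_parts, erase_insert hCP']
  · intro P hP
    rw [mem_filter] at hP
    have hCP : C ∈ P.parts := hP.2 ▸ P.part_mem.mpr hx
    rw [erasePart_parts, ← Finset.prod_insert (notMem_erase C P.parts), insert_erase hCP]

end Combinatorics

section Key

variable {α β : Type*} [DecidableEq α] [DecidableEq β]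

open scoped Classical in
private lemma key_lemma (m : α → β) (s : Finset α) :
    (∑ P : Finpartition s,
        ∏ B ∈ P.parts, (if ∀ i ∈ B, ∀ j ∈ B, m i = m j then aW B.card else 0))
      = if Set.InjOn m ↑s then 1 else 0 := by
  induction s using Finset.strongInduction with
  | _ s ih =>
    rcases s.eq_empty_or_nonempty with rfl | ⟨x, hx⟩
    · have hparts : ∀ P : Finpartition (∅ : Finset α), P.parts = ∅ := by
        intro P
        rcases Finset.eq_empty_or_nonempty P.parts with h | ⟨B, hB⟩
        · exact h
        · have hBne := P.nonempty_of_mem_parts hB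
          have hBe : B = ∅ := Finset.subset_empty.mp (P.le hB)
          rw [hBe] at hBne
          exact absurd hBne (by simp)
      have hP0 : (Finpartition.empty (Finset α)).copy Finset.bot_eq_empty ∈
          (univ : Finset (Finpartition (∅ : Finset α))) := mem_univ _
      rw [Finset.sum_eq_single_of_mem _ hP0
        (fun Q _ hne => absurd (Finpartition.ext (by rw [hparts Q, hparts _])) hne)]
      rw [hparts, Finset.prod_empty]
      simp [Set.injOn_empty]
    · rw [finpart_rec (fun B => if ∀ i ∈ B, ∀ j ∈ B, m i = m j then aW B.card else 0) hx]
      have hstep : (∑ C ∈ s.powerset.filter (fun C => x ∈ C),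
            (if ∀ i ∈ C, ∀ j ∈ C, m i = m j then aW C.card else 0) *
              ∑ P : Finpartition (s \ C),
                ∏ B ∈ P.parts, (if ∀ i ∈ B, ∀ j ∈ B, m i = m j then aW B.card else 0))
          = ∑ C ∈ s.powerset.filter (fun C => x ∈ C),
            (if ∀ i ∈ C, ∀ j ∈ C, m i = m j then aW C.card else 0) *
              (if Set.InjOn m ↑(s \ C) then 1 else 0) := by
        refine Finset.sum_congr rfl fun C hC => ?_
        rw [mem_filter, mem_powerset] at hC
        rw [ih _ (Finset.sdiff_ssubset hC.1 ⟨x, hC.2⟩)]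
      rw [hstep]
      by_cases hinj : Set.InjOn m ↑s
      · rw [if_pos hinj]
        rw [Finset.sum_eq_single_of_mem ({x} : Finset α)
          (by rw [mem_filter, mem_powerset]
              exact ⟨singleton_subset_iff.mpr hx, mem_singleton_self x⟩)
          ?_]
        · have h1 : (∀ i ∈ ({x} : Finset α), ∀ j ∈ ({x} : Finset α), m i = m j) := by simp
          have h2 : Set.InjOn m ↑(s \ {x}) := hinj.mono (by
            rw [Finset.coe_subset]; exact sdiff_subset)
          rw [if_pos h1, if_pos h2, card_singleton]
          simp [aW]
        · intro C hC hne
          rw [mem_filter, mem_powerset] at hC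
          have hnc : ¬ (∀ i ∈ C, ∀ j ∈ C, m i = m j) := by
            intro hconst
            apply hne
            apply Finset.eq_singleton_iff_unique_mem.mpr
            refine ⟨hC.2, fun y hy => ?_⟩
            exact hinj (hC.1 hy) (hC.1 hC.2) (hconst y hy x hC.2)
          rw [if_neg hnc, zero_mul]
      · rw [if_neg hinj]
        set Fx := s.filter (fun i => m i = m x) with hFxdef
        have hxF : x ∈ Fx := mem_filter.mpr ⟨hx, rfl⟩
        have hFs : Fx ⊆ s := filter_subset _ _
        by_cases hrest : Set.InjOn m ↑(s \ Fx)
        · -- fiber of x has ≥ 2 elements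
          have hcard2 : 1 < Fx.card := by
            have hinj' := hinj
            rw [Set.InjOn] at hinj'
            push_neg at hinj'
            obtain ⟨a, ha, b, hb, heq, hne⟩ := hinj'
            rw [Finset.mem_coe] at ha hb
            by_cases haF : a ∈ Fx
            · have hbF : b ∈ Fx :=
                mem_filter.mpr ⟨hb, by rw [← heq]; exact (mem_filter.mp haF).2⟩
              exact Finset.one_lt_card.mpr ⟨a, haF, b, hbF, hne⟩
            · by_cases hbF : b ∈ Fx
              · exact absurd (mem_filter.mpr ⟨ha, heq.trans (mem_filter.mp hbF).2⟩) haF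
              · have hmem : ∀ c ∈ s, c ∉ Fx → c ∈ (↑(s \ Fx) : Set α) := fun c h1 h2 => by
                  rw [Finset.mem_coe, mem_sdiff]; exact ⟨h1, h2⟩
                exact absurd (hrest (hmem a ha haF) (hmem b hb hbF) heq) hne
          -- restrict the sum to T
          set T : Finset (Finset α) :=
            insert Fx ((Fx.erase x).image (fun y => Fx.erase y)) with hT
          have hTsub : T ⊆ s.powerset.filter (fun C => x ∈ C) := by
            intro C hC
            rw [hT, mem_insert, mem_image] at hC
            rw [mem_filter, mem_powerset]
            rcases hC with rfl | ⟨y, hy, rfl⟩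
            · exact ⟨hFs, hxF⟩
            · rw [mem_erase] at hy
              exact ⟨(erase_subset _ _).trans hFs, mem_erase.mpr ⟨fun h => hy.1 h.symm, hxF⟩⟩
          rw [← Finset.sum_subset hTsub ?vanish]
          case vanish =>
            intro C hC hnT
            rw [mem_filter, mem_powerset] at hC
            by_cases hconst : ∀ i ∈ C, ∀ j ∈ C, m i = m j
            · have hCF : C ⊆ Fx := fun i hi =>
                mem_filter.mpr ⟨hC.1 hi, hconst i hi x hC.2⟩
              by_cases hICC : Set.InjOn m ↑(s \ C)
              · -- then C ∈ T, contradiction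
                exfalso
                apply hnT
                have hsmall : (Fx \ C).card ≤ 1 := by
                  rw [Finset.card_le_one]
                  intro a ha b hb
                  rw [mem_sdiff] at ha hb
                  have ha' : a ∈ (↑(s \ C) : Set α) := by
                    rw [Finset.mem_coe, mem_sdiff]; exact ⟨hFs ha.1, ha.2⟩
                  have hb' : b ∈ (↑(s \ C) : Set α) := by
                    rw [Finset.mem_coe, mem_sdiff]; exact ⟨hFs hb.1, hb.2⟩
                  exact hICC ha' hb'
                    (((mem_filter.mp ha.1).2).trans ((mem_filter.mp hb.1).2).symm)
                rcases Nat.le_one_iff_eq_zero_or_eq_one.mp hsmall with h | h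
                · -- Fx ⊆ C, so C = Fx
                  have hemp : Fx \ C = ∅ := Finset.card_eq_zero.mp h
                  have hFC : Fx ⊆ C := by
                    intro a haF
                    by_contra haC
                    have : a ∈ Fx \ C := mem_sdiff.mpr ⟨haF, haC⟩
                    rw [hemp] at this
                    exact absurd this (notMem_empty a)
                  rw [hT, mem_insert]
                  left
                  exact Finset.Subset.antisymm hCF hFC
                · -- Fx \ C = {y}
                  obtain ⟨y, hy⟩ := Finset.card_eq_one.mp h
                  have hyF : y ∈ Fx := by
                    have : y ∈ Fx \ C := hy ▸ mem_singleton_self y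
                    exact (mem_sdiff.mp this).1
                  have hyC : y ∉ C := by
                    have : y ∈ Fx \ C := hy ▸ mem_singleton_self y
                    exact (mem_sdiff.mp this).2
                  have hyx : y ≠ x := fun h => hyC (h ▸ hC.2)
                  have hCeq : C = Fx.erase y := by
                    apply Finset.Subset.antisymm
                    · intro a haC
                      exact mem_erase.mpr ⟨fun h => hyC (h ▸ haC), hCF haC⟩
                    · intro a haE
                      rw [mem_erase] at haE
                      by_contra haC
                      have : a ∈ Fx \ C := mem_sdiff.mpr ⟨haE.2, haC⟩
                      rw [hy, mem_singleton] at this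
                      exact haE.1 this
                  rw [hT, mem_insert, mem_image]
                  exact Or.inr ⟨y, mem_erase.mpr ⟨hyx, hyF⟩, hCeq.symm⟩
              · rw [if_neg hICC, mul_zero]
            · rw [if_neg hconst, zero_mul]
          -- now compute the sum over T
          have hFnotimg : Fx ∉ (Fx.erase x).image (fun y => Fx.erase y) := by
            rw [mem_image]
            rintro ⟨y, hy, hEq⟩
            have hcard : Fx.card - 1 = Fx.card := by
              rw [← card_erase_of_mem (mem_of_mem_erase hy), hEq]
            omega
          rw [hT, Finset.sum_insert hFnotimg]
          have hconstF : ∀ i ∈ Fx, ∀ j ∈ Fx, m i = m j := fun i hi j hj =>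
            ((mem_filter.mp hi).2).trans ((mem_filter.mp hj).2).symm
          rw [if_pos hconstF, if_pos hrest, mul_one]
          rw [Finset.sum_image (fun y hy z hz hEq =>
            Finset.erase_injOn Fx (Finset.mem_coe.mpr (mem_of_mem_erase hy))
              (Finset.mem_coe.mpr (mem_of_mem_erase hz)) hEq)]
          have hterm : ∀ y ∈ Fx.erase x,
              (if ∀ i ∈ Fx.erase y, ∀ j ∈ Fx.erase y, m i = m j then aW (Fx.erase y).card else 0)
                * (if Set.InjOn m ↑(s \ Fx.erase y) then 1 else 0) = aW (Fx.card - 1) := by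
            intro y hy
            rw [mem_erase] at hy
            have hconstE : ∀ i ∈ Fx.erase y, ∀ j ∈ Fx.erase y, m i = m j := fun i hi j hj =>
              hconstF i (mem_of_mem_erase hi) j (mem_of_mem_erase hj)
            have hIE : Set.InjOn m ↑(s \ Fx.erase y) := by
              intro a ha b hb heq
              rw [Finset.mem_coe, mem_sdiff, mem_erase] at ha hb
              push_neg at ha hb
              rcases (em (a ∈ Fx)) with haF | haF
              · have hay : a = y := by
                  by_contra hne
                  exact absurd (ha.2 hne) (by simp [haF])
                rcases (em (b ∈ Fx)) with hbF | hbF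
                · have hby : b = y := by
                    by_contra hne
                    exact absurd (hb.2 hne) (by simp [hbF])
                  rw [hay, hby]
                · exact absurd (mem_filter.mpr ⟨hb.1,
                    heq.symm.trans ((mem_filter.mp (hay ▸ haF : a ∈ Fx)).2)⟩) hbF
              · rcases (em (b ∈ Fx)) with hbF | hbF
                · have hby : b = y := by
                    by_contra hne
                    exact absurd (hb.2 hne) (by simp [hbF])
                  exact absurd (mem_filter.mpr ⟨ha.1,
                    heq.trans ((mem_filter.mp (hby ▸ hbF : b ∈ Fx)).2)⟩) haF
                · have ha' : a ∈ (↑(s \ Fx) : Set α) := by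
                    rw [Finset.mem_coe, mem_sdiff]; exact ⟨ha.1, haF⟩
                  have hb' : b ∈ (↑(s \ Fx) : Set α) := by
                    rw [Finset.mem_coe, mem_sdiff]; exact ⟨hb.1, hbF⟩
                  exact hrest ha' hb' heq
            rw [if_pos hconstE, if_pos hIE, mul_one, card_erase_of_mem hy.2]
          rw [Finset.sum_congr rfl hterm, Finset.sum_const, card_erase_of_mem hxF]
          -- arithmetic: aW f + (f-1) • aW (f-1) = 0  for f ≥ 2
          obtain ⟨g, hg⟩ : ∃ g, Fx.card = g + 2 := ⟨Fx.card - 2, by omega⟩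
          rw [hg]
          show aW (g + 2) + (g + 2 - 1) • aW (g + 2 - 1) = 0
          rw [nsmul_eq_mul]
          simp only [aW, show g + 2 - 1 = g + 1 from rfl, show g + 1 - 1 = g from rfl]
          rw [Nat.factorial_succ]
          push_cast
          ring
        · -- no InjOn on s minus the fiber : every term vanishes
          apply Finset.sum_eq_zero
          intro C hC
          rw [mem_filter, mem_powerset] at hC
          by_cases hconst : ∀ i ∈ C, ∀ j ∈ C, m i = m j
          · have hCF : C ⊆ Fx := fun i hi =>
              mem_filter.mpr ⟨hC.1 hi, hconst i hi x hC.2⟩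
            have hnI : ¬ Set.InjOn m ↑(s \ C) := fun hI => hrest (hI.mono (by
              intro a ha
              rw [Finset.mem_coe, mem_sdiff] at ha ⊢
              exact ⟨ha.1, fun h => ha.2 (hCF h)⟩))
            rw [if_neg hnI, mul_zero]
          · rw [if_neg hconst, zero_mul]

end Key

section Sorting

private lemma sorted_eq {r : ℕ} {m : Fin r → ℕ}
    (hcard : (Finset.image m Finset.univ).card = r)
    (σ : Equiv.Perm (Fin r)) (hσ : StrictAnti fun i => m (σ i)) :
    (fun i => m (σ (Fin.rev i))) = (Finset.image m Finset.univ).orderEmbOfFin hcard := by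
  apply Finset.orderEmbOfFin_unique hcard
  · intro i; exact Finset.mem_image_of_mem m (Finset.mem_univ _)
  · intro a b hab
    exact hσ (Fin.rev_lt_rev.mpr hab)

private lemma strictAnti_comp_unique {r : ℕ} {m : Fin r → ℕ} (hm : Function.Injective m)
    {σ τ : Equiv.Perm (Fin r)} (hσ : StrictAnti fun i => m (σ i))
    (hτ : StrictAnti fun i => m (τ i)) : σ = τ := by
  have hcard : (Finset.image m Finset.univ).card = r := by
    rw [Finset.card_image_of_injective _ hm, Finset.card_univ, Fintype.card_fin]
  have h3 : (fun i => m (σ (Fin.rev i))) = fun i => m (τ (Fin.rev i)) :=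
    (sorted_eq hcard σ hσ).trans (sorted_eq hcard τ hτ).symm
  apply Equiv.ext
  intro j
  have h4 := congrFun h3 (Fin.rev j)
  simp only [Fin.rev_rev] at h4
  exact hm h4

private def sortPerm {r : ℕ} (m : Fin r → ℕ) : Equiv.Perm (Fin r) :=
  Fin.revPerm.trans (Tuple.sort m)

private lemma strictAnti_sortPerm {r : ℕ} {m : Fin r → ℕ} (hm : Function.Injective m) :
    StrictAnti fun i => m (sortPerm m i) := by
  have hsm : StrictMono (m ∘ Tuple.sort m) :=
    (Tuple.monotone_sort m).strictMono_of_injective (hm.comp (Equiv.injective _))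
  intro a b hab
  exact hsm (Fin.rev_lt_rev.mpr hab)

private def sortEquiv (r : ℕ) :
    (Equiv.Perm (Fin r) × {n : Fin r → ℕ // StrictAnti n ∧ ∀ i, 1 ≤ n i}) ≃
      {m : Fin r → ℕ // Function.Injective m ∧ ∀ i, 1 ≤ m i} where
  toFun p := ⟨fun i => p.2.1 (p.1⁻¹ i),
    fun i j h => (Equiv.injective _) (p.2.2.1.injective h),
    fun i => p.2.2.2 _⟩
  invFun q := ⟨sortPerm q.1, ⟨fun i => q.1 (sortPerm q.1 i),
    strictAnti_sortPerm q.2.1, fun i => q.2.2 _⟩⟩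
  left_inv p := by
    obtain ⟨σ, n, hn1, hn2⟩ := p
    have hm : Function.Injective (fun i => n (σ⁻¹ i)) :=
      fun i j h => (Equiv.injective _) (hn1.injective h)
    have hanti : StrictAnti (fun j => (fun i => n (σ⁻¹ i)) (σ j)) := by
      have he : (fun j => (fun i => n (σ⁻¹ i)) (σ j)) = n := funext fun j => by simp
      rw [he]; exact hn1
    have hσeq : sortPerm (fun i => n (σ⁻¹ i)) = σ :=
      strictAnti_comp_unique hm (strictAnti_sortPerm hm) hanti
    simp only [Prod.mk.injEq, hσeq]
    refine ⟨trivial, Subtype.ext (funext fun i => ?_)⟩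
    simp only [hσeq, Equiv.Perm.coe_inv, Equiv.symm_apply_apply]
  right_inv q := by
    apply Subtype.ext
    funext i
    simp only [Equiv.Perm.coe_inv, Equiv.apply_symm_apply]

end Sorting

section PartEquiv

private noncomputable def partEquiv {r : ℕ} (P : Finpartition (Finset.univ : Finset (Fin r))) :
    ({B : Finset (Fin r) // B ∈ P.parts} → ℕ) ≃
      {m : Fin r → ℕ // ∀ B ∈ P.parts, ∀ i ∈ B, ∀ j ∈ B, m i = m j} where
  toFun v := ⟨fun i => v ⟨P.part i, P.part_mem.mpr (mem_univ i)⟩, by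
    intro B hB i hi j hj
    have h1 : P.part i = B := P.part_eq_of_mem hB hi
    have h2 : P.part j = B := P.part_eq_of_mem hB hj
    have h3 : (⟨P.part i, P.part_mem.mpr (mem_univ i)⟩ : {B // B ∈ P.parts})
        = ⟨P.part j, P.part_mem.mpr (mem_univ j)⟩ := Subtype.ext (h1.trans h2.symm)
    exact congrArg v h3⟩
  invFun q B := q.1 (P.nonempty_of_mem_parts B.2).choose
  left_inv v := by
    funext B
    have hch := (P.nonempty_of_mem_parts B.2).choose_spec
    have h3 : (⟨P.part (P.nonempty_of_mem_parts B.2).choose,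
        P.part_mem.mpr (mem_univ _)⟩ : {B // B ∈ P.parts}) = B :=
      Subtype.ext (P.part_eq_of_mem B.2 hch)
    exact congrArg v h3
  right_inv q := by
    apply Subtype.ext
    funext i
    have hch := (P.nonempty_of_mem_parts (P.part_mem.mpr (mem_univ i))).choose_spec
    exact q.2 (P.part i) (P.part_mem.mpr (mem_univ i)) _ hch i (P.mem_part (mem_univ i))

end PartEquiv

/-- Hoffman's relation (symmetrized harmonic product formula): for `r ≥ 2` and
`Re s_j > 1` for all `j`,
`∑_{σ ∈ S_r} ζ_r(s_{σ(1)},…,s_{σ(r)})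
  = ∑_Π (−1)^{r−|Π|}(∏_{B∈Π}(|B|−1)!)·∏_{B∈Π} ζ(∑_{k∈B} s_k)`,
summed over all set partitions `Π` of `{1,…,r}`. -/
theorem hoffman_relation (r : ℕ) (hr : 2 ≤ r) (s : Fin r → ℂ)
    (hs : ∀ j, 1 < (s j).re) :
    ∑ σ : Equiv.Perm (Fin r), eulerZagierZeta r (fun i => s (σ i)) =
      ∑ P : Finpartition (Finset.univ : Finset (Fin r)),
        (-1 : ℂ) ^ (r - P.parts.card) *
          ∏ B ∈ P.parts,
            ((Nat.factorial (B.card - 1) : ℂ) * riemannZeta (∑ k ∈ B, s k)) := by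
  classical
  have hsne : ∀ j, s j ≠ 0 := fun j => Complex.ne_zero_of_one_lt_re (hs j)
  set F : (Fin r → ℕ) → ℂ := fun m => ∏ i, ((m i : ℕ) : ℂ) ^ (-(s i)) with hFdef
  obtain ⟨hFnorm, -⟩ := pi_hasSum (fun i (n : ℕ) => (n : ℂ) ^ (-(s i)))
    (fun i => summable_norm_nat_cpow (hs i))
  have hFnorm' : Summable fun m : Fin r → ℕ => ‖F m‖ := hFnorm
  have hFsum : Summable F := hFnorm'.of_norm
  set I : Set (Fin r → ℕ) := {m | Function.Injective m ∧ ∀ i, 1 ≤ m i} with hIdef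
  have hFI : Summable fun m : I => F m := hFsum.subtype I
  have hFJ : Summable (fun m : {m : Fin r → ℕ // Function.Injective m ∧ ∀ i, 1 ≤ m i} =>
      F m.1) := by
    have h := hFsum.subtype I
    exact h
  -- The left-hand side
  have step1 : ∀ σ : Equiv.Perm (Fin r), eulerZagierZeta r (fun i => s (σ i)) =
      ∑' n : {n : Fin r → ℕ // StrictAnti n ∧ ∀ i, 1 ≤ n i}, F (fun i => n.1 (σ⁻¹ i)) := by
    intro σ
    unfold eulerZagierZeta
    refine tsum_congr fun n => ?_
    show (∏ i, ((n.1 i : ℕ) : ℂ) ^ (-(s (σ i)))) = ∏ i, ((n.1 (σ⁻¹ i) : ℕ) : ℂ) ^ (-(s i))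
    calc (∏ i, ((n.1 i : ℕ) : ℂ) ^ (-(s (σ i))))
        = ∏ i, (fun j => ((n.1 (σ⁻¹ j) : ℕ) : ℂ) ^ (-(s j))) (σ i) := by
          refine Finset.prod_congr rfl fun i _ => ?_
          simp [Equiv.Perm.coe_inv]
      _ = ∏ j, ((n.1 (σ⁻¹ j) : ℕ) : ℂ) ^ (-(s j)) :=
          Equiv.prod_comp σ (fun j => ((n.1 (σ⁻¹ j) : ℕ) : ℂ) ^ (-(s j)))
  have hGsum : Summable (fun p : Equiv.Perm (Fin r) ×
      {n : Fin r → ℕ // StrictAnti n ∧ ∀ i, 1 ≤ n i} => F (fun i => p.2.1 (p.1⁻¹ i))) := by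
    have h := (sortEquiv r).summable_iff.mpr hFJ
    exact h
  have hLHS : (∑ σ : Equiv.Perm (Fin r), eulerZagierZeta r fun i => s (σ i)) =
      ∑' m : I, F m := by
    calc (∑ σ : Equiv.Perm (Fin r), eulerZagierZeta r fun i => s (σ i))
        = ∑ σ : Equiv.Perm (Fin r),
            ∑' n : {n : Fin r → ℕ // StrictAnti n ∧ ∀ i, 1 ≤ n i}, F (fun i => n.1 (σ⁻¹ i)) :=
          Finset.sum_congr rfl fun σ _ => step1 σ
      _ = ∑' σ : Equiv.Perm (Fin r),
            ∑' n : {n : Fin r → ℕ // StrictAnti n ∧ ∀ i, 1 ≤ n i}, F (fun i => n.1 (σ⁻¹ i)) :=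
          (tsum_fintype _).symm
      _ = ∑' p : Equiv.Perm (Fin r) × {n : Fin r → ℕ // StrictAnti n ∧ ∀ i, 1 ≤ n i},
            F (fun i => p.2.1 (p.1⁻¹ i)) :=
          (Summable.tsum_prod' hGsum fun σ => hGsum.prod_factor σ).symm
      _ = ∑' m : {m : Fin r → ℕ // Function.Injective m ∧ ∀ i, 1 ≤ m i}, F m.1 :=
          (sortEquiv r).tsum_eq
            (fun m : {m : Fin r → ℕ // Function.Injective m ∧ ∀ i, 1 ≤ m i} => F m.1)
      _ = ∑' m : I, F m := rfl
  -- The right-hand side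
  set SP : Finpartition (Finset.univ : Finset (Fin r)) → Set (Fin r → ℕ) :=
    fun P => {m | ∀ B ∈ P.parts, ∀ i ∈ B, ∀ j ∈ B, m i = m j} with hSPdef
  have hzeta : ∀ P : Finpartition (Finset.univ : Finset (Fin r)),
      (∏ B ∈ P.parts, riemannZeta (∑ k ∈ B, s k)) = ∑' m : SP P, F m := by
    intro P
    have hre : ∀ B (hB : B ∈ P.parts), 1 < (∑ k ∈ B, s k).re := by
      intro B hB
      obtain ⟨a, ha⟩ := P.nonempty_of_mem_parts hB
      rw [Complex.re_sum]
      calc (1 : ℝ) < (s a).re := hs a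
        _ ≤ ∑ k ∈ B, (s k).re :=
          Finset.single_le_sum (fun k _ => le_of_lt (lt_trans zero_lt_one (hs k))) ha
    obtain ⟨-, hPtsum⟩ := pi_hasSum (ι := {B // B ∈ P.parts})
      (fun B (n : ℕ) => (n : ℂ) ^ (-(∑ k ∈ B.1, s k)))
      (fun B => summable_norm_nat_cpow (hre B.1 B.2))
    have hFv : ∀ v : {B // B ∈ P.parts} → ℕ,
        (∏ B : {B // B ∈ P.parts}, ((v B : ℕ) : ℂ) ^ (-(∑ k ∈ B.1, s k)))
          = F ((partEquiv P v).1) := by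
      intro v
      set w : Fin r → ℂ :=
        fun i => ((v ⟨P.part i, P.part_mem.mpr (mem_univ i)⟩ : ℕ) : ℂ) ^ (-(s i)) with hwdef
      have hright : F ((partEquiv P v).1) = ∏ B ∈ P.parts.attach, ∏ i ∈ B.1, w i := by
        show (∏ i ∈ (Finset.univ : Finset (Fin r)), w i) = _
        conv_lhs => rw [← P.biUnion_parts]
        rw [Finset.prod_biUnion P.supIndep.pairwiseDisjoint]
        exact (Finset.prod_attach P.parts fun B => ∏ i ∈ B, w i).symm
      have hleft : ∀ B ∈ P.parts.attach,
          ((v B : ℕ) : ℂ) ^ (-(∑ k ∈ B.1, s k)) = ∏ i ∈ B.1, w i := by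
        intro B _
        have h1 : ∀ i ∈ B.1, w i = ((v B : ℕ) : ℂ) ^ (-(s i)) := by
          intro i hi
          show ((v ⟨P.part i, P.part_mem.mpr (mem_univ i)⟩ : ℕ) : ℂ) ^ (-(s i)) = _
          congr 2
          exact congrArg v (Subtype.ext (P.part_eq_of_mem B.2 hi))
        rw [Finset.prod_congr rfl h1]
        exact (natCast_cpow_neg_sum (P.nonempty_of_mem_parts B.2) (fun k _ => hs k) (v B)).symm
      calc (∏ B : {B // B ∈ P.parts}, ((v B : ℕ) : ℂ) ^ (-(∑ k ∈ B.1, s k)))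
          = ∏ B ∈ P.parts.attach, ((v B : ℕ) : ℂ) ^ (-(∑ k ∈ B.1, s k)) := by
            rw [Finset.univ_eq_attach]
        _ = ∏ B ∈ P.parts.attach, ∏ i ∈ B.1, w i := Finset.prod_congr rfl hleft
        _ = F ((partEquiv P v).1) := hright.symm
    calc (∏ B ∈ P.parts, riemannZeta (∑ k ∈ B, s k))
        = ∏ B ∈ P.parts.attach, riemannZeta (∑ k ∈ B.1, s k) :=
          (Finset.prod_attach P.parts fun B => riemannZeta (∑ k ∈ B, s k)).symm
      _ = ∏ B : {B // B ∈ P.parts}, ∑' n : ℕ, (n : ℂ) ^ (-(∑ k ∈ B.1, s k)) := by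
          rw [Finset.univ_eq_attach]
          exact Finset.prod_congr rfl fun B _ => (tsum_nat_cpow (hre B.1 B.2)).symm
      _ = ∑' v : {B // B ∈ P.parts} → ℕ,
            ∏ B : {B // B ∈ P.parts}, ((v B : ℕ) : ℂ) ^ (-(∑ k ∈ B.1, s k)) := hPtsum.symm
      _ = ∑' v : {B // B ∈ P.parts} → ℕ, F ((partEquiv P v).1) := tsum_congr hFv
      _ = ∑' m : {m : Fin r → ℕ // ∀ B ∈ P.parts, ∀ i ∈ B, ∀ j ∈ B, m i = m j}, F m.1 :=
          (partEquiv P).tsum_eq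
            (fun m : {m : Fin r → ℕ // ∀ B ∈ P.parts, ∀ i ∈ B, ∀ j ∈ B, m i = m j} => F m.1)
      _ = ∑' m : SP P, F m := rfl
  have hwt : ∀ P : Finpartition (Finset.univ : Finset (Fin r)),
      ((-1 : ℂ) ^ (r - P.parts.card) *
          ∏ B ∈ P.parts, ((Nat.factorial (B.card - 1) : ℂ) * riemannZeta (∑ k ∈ B, s k)))
        = (∏ B ∈ P.parts, aW B.card) * ∑' m, (SP P).indicator F m := by
    intro P
    have h1 : (∑' m : SP P, F m) = ∑' m, (SP P).indicator F m := tsum_subtype (SP P) F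
    rw [← h1, ← hzeta P, Finset.prod_mul_distrib]
    have hsum : (∑ B ∈ P.parts, (B.card - 1)) = r - P.parts.card := by
      have h3 : (∑ B ∈ P.parts, B.card) = r := by
        rw [P.sum_card_parts, Finset.card_univ, Fintype.card_fin]
      have h4 : ∀ B ∈ P.parts, 1 ≤ B.card :=
        fun B hB => Finset.card_pos.mpr (P.nonempty_of_mem_parts hB)
      have h5 := Finset.sum_tsub_distrib (f := fun B : Finset (Fin r) => B.card)
        (g := fun _ => 1) (s := P.parts) h4
      rw [h5, h3, Finset.sum_const, smul_eq_mul, mul_one]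
    have h2 : (∏ B ∈ P.parts, aW B.card)
        = (-1 : ℂ) ^ (r - P.parts.card) * ∏ B ∈ P.parts, (Nat.factorial (B.card - 1) : ℂ) := by
      rw [show (∏ B ∈ P.parts, aW B.card) = ∏ B ∈ P.parts,
        ((-1 : ℂ) ^ (B.card - 1) * (Nat.factorial (B.card - 1) : ℂ)) from rfl]
      rw [Finset.prod_mul_distrib, Finset.prod_pow_eq_pow_sum, hsum]
    rw [h2]; ring
  have hpoint : ∀ m : Fin r → ℕ,
      (∑ P : Finpartition (Finset.univ : Finset (Fin r)),
          (∏ B ∈ P.parts, aW B.card) * (SP P).indicator F m)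
        = ({m : Fin r → ℕ | Function.Injective m}).indicator F m := by
    intro m
    have h1 : ∀ P : Finpartition (Finset.univ : Finset (Fin r)),
        (∏ B ∈ P.parts, aW B.card) * (SP P).indicator F m
          = (∏ B ∈ P.parts, if ∀ i ∈ B, ∀ j ∈ B, m i = m j then aW B.card else 0) * F m := by
      intro P
      by_cases hm : ∀ B ∈ P.parts, ∀ i ∈ B, ∀ j ∈ B, m i = m j
      · rw [Set.indicator_of_mem (show m ∈ SP P from hm) F,
          Finset.prod_congr rfl fun B hB => if_pos (hm B hB)]
      · rw [Set.indicator_of_notMem (show m ∉ SP P from hm) F, mul_zero]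
        obtain ⟨B, hfail⟩ := not_forall.mp hm
        obtain ⟨hB, hnQ⟩ := Classical.not_imp.mp hfail
        have hz : (∏ B ∈ P.parts, if ∀ i ∈ B, ∀ j ∈ B, m i = m j then aW B.card else 0)
            = 0 := Finset.prod_eq_zero hB (if_neg hnQ)
        rw [hz, zero_mul]
    rw [Finset.sum_congr rfl fun P _ => h1 P, ← Finset.sum_mul]
    have hkey : (∑ P : Finpartition (Finset.univ : Finset (Fin r)),
        ∏ B ∈ P.parts, if ∀ i ∈ B, ∀ j ∈ B, m i = m j then aW B.card else 0)
          = if Set.InjOn m ↑(Finset.univ : Finset (Fin r)) then 1 else 0 :=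
      by
        convert key_lemma m (Finset.univ : Finset (Fin r)) using 2
        refine Finset.prod_congr rfl fun B _ => ?_
        congr
    rw [hkey]
    by_cases hinj : Function.Injective m
    · rw [if_pos (by rw [Finset.coe_univ]; exact Set.injOn_univ.mpr hinj),
        Set.indicator_of_mem (show m ∈ {m : Fin r → ℕ | Function.Injective m} from hinj) F,
        one_mul]
    · rw [if_neg (fun h => hinj (Set.injOn_univ.mp
          (by rwa [Finset.coe_univ] at h))),
        Set.indicator_of_notMem
          (show m ∉ {m : Fin r → ℕ | Function.Injective m} from hinj) F, zero_mul]
  have hind : ∀ m : Fin r → ℕ,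
      ({m : Fin r → ℕ | Function.Injective m}).indicator F m = I.indicator F m := by
    intro m
    by_cases h1 : Function.Injective m
    · by_cases h2 : ∀ i, 1 ≤ m i
      · rw [Set.indicator_of_mem (show m ∈ {m : Fin r → ℕ | Function.Injective m} from h1) F,
          Set.indicator_of_mem (show m ∈ I from ⟨h1, h2⟩) F]
      · have hFm0 : F m = 0 := by
          have h2' := h2
          push_neg at h2'
          obtain ⟨i, hi⟩ := h2'
          have h0 : m i = 0 := by omega
          show (∏ i, ((m i : ℕ) : ℂ) ^ (-(s i))) = 0
          refine Finset.prod_eq_zero (Finset.mem_univ i) ?_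
          rw [h0, Nat.cast_zero, Complex.zero_cpow (neg_ne_zero.mpr (hsne i))]
        rw [Set.indicator_of_mem (show m ∈ {m : Fin r → ℕ | Function.Injective m} from h1) F,
          hFm0,
          Set.indicator_of_notMem (show m ∉ I from fun hmem => h2 hmem.2) F]
    · rw [Set.indicator_of_notMem
          (show m ∉ {m : Fin r → ℕ | Function.Injective m} from h1) F,
        Set.indicator_of_notMem (show m ∉ I from fun hmem => h1 hmem.1) F]
  have hRHS : (∑ P : Finpartition (Finset.univ : Finset (Fin r)),
      (-1 : ℂ) ^ (r - P.parts.card) *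
        ∏ B ∈ P.parts, ((Nat.factorial (B.card - 1) : ℂ) * riemannZeta (∑ k ∈ B, s k)))
      = ∑' m : I, F m := by
    rw [Finset.sum_congr rfl fun P _ => hwt P]
    have hsummand : ∀ P ∈ (Finset.univ : Finset (Finpartition (Finset.univ : Finset (Fin r)))),
        Summable fun m => (∏ B ∈ P.parts, aW B.card) * (SP P).indicator F m := by
      intro P _
      have h2 : Summable (fun m : SP P => F m) := hFsum.subtype (SP P)
      have h3 : Summable ((SP P).indicator F) := summable_subtype_iff_indicator.mp h2
      exact h3.mul_left _
    calc (∑ P : Finpartition (Finset.univ : Finset (Fin r)),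
          (∏ B ∈ P.parts, aW B.card) * ∑' m, (SP P).indicator F m)
        = ∑ P : Finpartition (Finset.univ : Finset (Fin r)),
            ∑' m, (∏ B ∈ P.parts, aW B.card) * (SP P).indicator F m :=
          Finset.sum_congr rfl fun P _ => (tsum_mul_left).symm
      _ = ∑' m, ∑ P : Finpartition (Finset.univ : Finset (Fin r)),
            (∏ B ∈ P.parts, aW B.card) * (SP P).indicator F m := (Summable.tsum_finsetSum hsummand).symm
      _ = ∑' m, ({m : Fin r → ℕ | Function.Injective m}).indicator F m :=
          tsum_congr hpoint
      _ = ∑' m, I.indicator F m := tsum_congr hind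
      _ = ∑' m : I, F m := (tsum_subtype I F).symm
  rw [hLHS, hRHS]
end
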